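/- With the construction below, the intersection graph IG[P̃] of the modified instance P̃ is a forest, i.e., contains no cycle. (Claim 6.1.) -/

import Mathlib

noncomputable section
open scoped Classical

/-- A point in the Euclidean plane. -/
abbrev Point : Type := ℝ × ℝ

/-- The Manhattan distance `d(p, q)`. -/
def manh (p q : Point) : ℝ := |p.1 - q.1| + |p.2 - q.2|

/-- The Euclidean length `‖pq‖` of the segment between `p` and `q`. -/
def euclen (p q : Point) : ℝ := Real.sqrt ((p.1 - q.1) ^ 2 + (p.2 - q.2) ^ 2)

/-- The segment `pq` is axis-aligned. -/
def axisAligned (p q : Point) : Prop := p.1 = q.1 ∨ p.2 = q.2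

/-- `z` lies in the bounding box `B(a, b)` (componentwise between `a ⊓ b` and `a ⊔ b`). -/
def inBox (a b z : Point) : Prop := a ⊓ b ≤ z ∧ z ≤ a ⊔ b

lemma euclen_comm (p q : Point) : euclen p q = euclen q p := by
  unfold euclen; ring_nf

/-- Length of an (unordered) edge. -/
def sym2Len : Sym2 Point → ℝ := Sym2.lift ⟨euclen, euclen_comm⟩

/-- The length of a network, given by its (finite) edge set. -/
def netLength (N : Finset (Sym2 Point)) : ℝ := ∑ e ∈ N, sym2Len e

/-- A (simple) path in the plane, given by its sequence of (distinct) vertices. -/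
structure GPath where
  k : ℕ
  pts : Fin (k + 1) → Point
  inj : Function.Injective pts

/-- The `i`-th edge of a path. -/
def GPath.edge (π : GPath) (i : Fin π.k) : Sym2 Point :=
  s(π.pts i.castSucc, π.pts i.succ)

/-- The edge set of a path. -/
def GPath.edges (π : GPath) : Finset (Sym2 Point) :=
  Finset.image π.edge Finset.univ

/-- The total (Euclidean) length of a path. -/
def GPath.length (π : GPath) : ℝ :=
  ∑ i : Fin π.k, euclen (π.pts i.castSucc) (π.pts i.succ)

/-- `π` is a Manhattan path (M-path) for the pair `(s, t)`: an `s`–`t` path all of whose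
edges are axis-aligned and whose total length equals the Manhattan distance `d(s, t)`. -/
def IsMPath (s t : Point) (π : GPath) : Prop :=
  π.pts 0 = s ∧ π.pts (Fin.last π.k) = t ∧
  (∀ i : Fin π.k, axisAligned (π.pts i.castSucc) (π.pts i.succ)) ∧
  π.length = manh s t

/-- A GMMN instance: a finite set of pairs of points. -/
abbrev Inst : Type := Finset (Point × Point)

/-- The vertex set of the Hanan grid `H(P)`. -/
def hananV (P : Inst) : Finset Point :=
  ((P.image fun v => v.1.1) ∪ (P.image fun v => v.2.1)) ×ˢ
  ((P.image fun v => v.1.2) ∪ (P.image fun v => v.2.2))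

/-- `{p, q}` is an edge of the Hanan grid `H(P)`: an axis-aligned segment between two distinct
grid vertices containing no third grid vertex. -/
def IsHananEdge (P : Inst) (p q : Point) : Prop :=
  p ∈ hananV P ∧ q ∈ hananV P ∧ p ≠ q ∧ axisAligned p q ∧
  ∀ z ∈ hananV P, inBox p q z → z = p ∨ z = q

/-- All edges of the path `π` are edges of the Hanan grid `H(P)`. -/
def OnGrid (P : Inst) (π : GPath) : Prop :=
  ∀ i : Fin π.k, IsHananEdge P (π.pts i.castSucc) (π.pts i.succ)

/-- `π ∈ Π_P(u)`: an M-path for the pair `u` that is a subgraph of the Hanan grid `H(P)`. -/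
def InPi (P : Inst) (u : Point × Point) (π : GPath) : Prop :=
  IsMPath u.1 u.2 π ∧ OnGrid P π

/-- The network `∪_{v ∈ P} π_v` determined by a choice of M-paths. -/
def netOf (P : Inst) (f : Point × Point → GPath) : Finset (Sym2 Point) :=
  P.biUnion fun v => (f v).edges

/-- `f` gives a feasible solution in `Feas(P)`: an M-path on the Hanan grid for each pair. -/
def IsFeasChoice (P : Inst) (f : Point × Point → GPath) : Prop :=
  ∀ v ∈ P, InPi P v (f v)

/-- `f` gives an optimal solution in `Opt(P)`. -/
def IsOptChoice (P : Inst) (f : Point × Point → GPath) : Prop :=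
  IsFeasChoice P f ∧
  ∀ g : Point × Point → GPath, IsFeasChoice P g →
    netLength (netOf P f) ≤ netLength (netOf P g)

/-- Adjacency in the intersection graph `IG[P]`: `u ≠ v` and the induced subgrids
`H(P, u)` and `H(P, v)` share an edge. -/
def IGAdj (P : Inst) (u v : Point × Point) : Prop :=
  u ≠ v ∧ ∃ p q : Point, IsHananEdge P p q ∧
    inBox u.1 u.2 p ∧ inBox u.1 u.2 q ∧ inBox v.1 v.2 p ∧ inBox v.1 v.2 q

/-- The total length `‖π₁ ∩ π₂‖` of the segments shared by two paths. -/
def sharedLen (π₁ π₂ : GPath) : ℝ := netLength (π₁.edges ∩ π₂.edges)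

/-- A pair `(p, q)` with `p_x ≤ q_x` is regular if `p_y ≤ q_y`. -/
def Regular (u : Point × Point) : Prop := u.1.1 ≤ u.2.1 ∧ u.1.2 ≤ u.2.2

/-- A pair `(p, q)` with `p_x ≤ q_x` is flipped if `p_y ≥ q_y`. -/
def Flipped (u : Point × Point) : Prop := u.1.1 ≤ u.2.1 ∧ u.2.2 ≤ u.1.2

/-- The intersection graph `IG[P]` as a simple graph on the pairs of `P`. -/
def IG (P : Inst) : SimpleGraph {v : Point × Point // v ∈ P} where
  Adj u v := IGAdj P u.1 v.1
  symm := by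
    refine ⟨?_⟩
    rintro u v ⟨hne, p, q, he, h1, h2, h3, h4⟩
    exact ⟨hne.symm, p, q, he, h3, h4, h1, h2⟩
  loopless := ⟨fun u h => h.1 rfl⟩


/-- A pair is degenerate if its two terminals share a coordinate. -/
def Degenerate (u : Point × Point) : Prop := u.1.1 = u.2.1 ∨ u.1.2 = u.2.2


/-! ### Auxiliary material for Claim 6.1 -/

section GMMNaux

open SimpleGraph Walk

variable {V : Type} {G : SimpleGraph V}

private lemma gmmn_conn_edge_bound [Fintype V] (G : SimpleGraph V) (hG : G.Connected) :
    Fintype.card V - 1 ≤ G.edgeFinset.card := by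
  classical
  obtain ⟨r⟩ := hG.nonempty
  have key : ∀ u : V, u ≠ r → ∃ w, G.Adj u w ∧ G.dist w r < G.dist u r := by
    intro u hu
    obtain ⟨p, hp⟩ := (hG.preconnected u r).exists_walk_length_eq_dist
    cases p with
    | nil => exact absurd rfl hu
    | @cons _ w _ h p' =>
      refine ⟨w, h, ?_⟩
      have h1 : G.dist w r ≤ p'.length := SimpleGraph.dist_le p'
      have h2 : p'.length + 1 = G.dist u r := by simpa using hp
      omega
  let f : V → Sym2 V := fun u => if h : u = r then s(u, u) else s(u, (key u h).choose)
  have hmap : ∀ u ∈ Finset.univ.erase r, f u ∈ G.edgeFinset := by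
    intro u hu
    have hu' : u ≠ r := (Finset.mem_erase.1 hu).1
    simp only [f, dif_neg hu', SimpleGraph.mem_edgeFinset, SimpleGraph.mem_edgeSet]
    exact ((key u hu').choose_spec).1
  have hinj : Set.InjOn f (Finset.univ.erase r) := by
    intro u hu u' hu' heq
    have h1 : u ≠ r := (Finset.mem_erase.1 (by exact_mod_cast hu)).1
    have h2 : u' ≠ r := (Finset.mem_erase.1 (by exact_mod_cast hu')).1
    simp only [f, dif_neg h1, dif_neg h2, Sym2.eq_iff] at heq
    rcases heq with ⟨h, _⟩ | ⟨ha, hb⟩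
    · exact h
    · have d1 := ((key u h1).choose_spec).2
      have d2 := ((key u' h2).choose_spec).2
      rw [hb] at d1
      rw [← ha] at d2
      omega
  calc Fintype.card V - 1 = (Finset.univ.erase r).card := by
        rw [Finset.card_erase_of_mem (Finset.mem_univ r), Finset.card_univ]
    _ ≤ G.edgeFinset.card := Finset.card_le_card_of_injOn f hmap hinj

private lemma gmmn_conn_delete_edge {x y : V} (hG : G.Connected)
    (h : (G.deleteEdges {s(x, y)}).Reachable x y) :
    (G.deleteEdges {s(x, y)}).Connected := by
  rw [SimpleGraph.connected_iff] at hG ⊢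
  refine ⟨fun a b => ?_, hG.2⟩
  obtain ⟨p⟩ := hG.1 a b
  induction p with
  | nil => exact Reachable.refl _
  | @cons a c b hadj p ih =>
    refine Reachable.trans ?_ ih
    by_cases he : s(a, c) = s(x, y)
    · rw [Sym2.eq_iff] at he
      rcases he with ⟨rfl, rfl⟩ | ⟨rfl, rfl⟩
      · exact h
      · exact h.symm
    · exact SimpleGraph.Adj.reachable
        (by rw [SimpleGraph.deleteEdges_adj]; exact ⟨hadj, by simpa using he⟩)

private lemma gmmn_two_cycles [Fintype V] (G : SimpleGraph V) (hG : G.Connected)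
    (hcard : G.edgeFinset.card ≤ Fintype.card V) (hn : 2 ≤ Fintype.card V)
    {x y : V} (S : G.Walk x x) (T : G.Walk y y) (hS : S.IsCycle) (hT : T.IsCycle)
    (e : Sym2 V) (heS : e ∈ S.edges) (heT : e ∉ T.edges) : False := by
  classical
  revert heS heT
  induction e using Sym2.ind with
  | _ x₁ y₁ =>
  intro heS heT
  have hreach : (G.deleteEdges {s(x₁, y₁)}).Reachable x₁ y₁ :=
    (SimpleGraph.adj_and_reachable_delete_edges_iff_exists_cycle.mpr ⟨x, S, hS, heS⟩).2
  have hconn₁ : (G.deleteEdges {s(x₁, y₁)}).Connected := gmmn_conn_delete_edge hG hreach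
  have hTkeep : ∀ f ∈ T.edges, f ∉ ({s(x₁, y₁)} : Set (Sym2 V)) := by
    intro f hf hmem
    rw [Set.mem_singleton_iff] at hmem
    subst hmem
    exact heT hf
  have hT₁c : (T.toDeleteEdges {s(x₁, y₁)} hTkeep).IsCycle := hT.transfer _
  set T₁ := T.toDeleteEdges {s(x₁, y₁)} hTkeep with hT₁def
  have hlen : T₁.edges ≠ [] := by
    have h3 := hT₁c.three_le_length
    intro hnil
    have hl := Walk.length_edges T₁
    rw [hnil] at hl
    simp only [List.length_nil] at hl
    omega
  obtain ⟨f, hf⟩ := List.exists_mem_of_ne_nil _ hlen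
  revert hf
  induction f using Sym2.ind with
  | _ x₂ y₂ =>
  intro hf
  have hreach₂ :
      ((G.deleteEdges {s(x₁, y₁)}).deleteEdges {s(x₂, y₂)}).Reachable x₂ y₂ :=
    (SimpleGraph.adj_and_reachable_delete_edges_iff_exists_cycle.mpr ⟨y, T₁, hT₁c, hf⟩).2
  have hconn₂ := gmmn_conn_delete_edge hconn₁ hreach₂
  have hbound := gmmn_conn_edge_bound ((G.deleteEdges {s(x₁, y₁)}).deleteEdges {s(x₂, y₂)}) hconn₂
  have h1 : s(x₁, y₁) ∈ G.edgeFinset := by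
    rw [SimpleGraph.mem_edgeFinset]
    exact S.edges_subset_edgeSet heS
  have h2 : s(x₂, y₂) ∈ G.edgeFinset.erase s(x₁, y₁) := by
    have hth := T₁.edges_subset_edgeSet hf
    rw [SimpleGraph.edgeSet_deleteEdges] at hth
    rw [Finset.mem_erase, SimpleGraph.mem_edgeFinset]
    exact ⟨by simpa using hth.2, hth.1⟩
  have hefin : ((G.deleteEdges {s(x₁, y₁)}).deleteEdges {s(x₂, y₂)}).edgeFinset ⊆
      (G.edgeFinset.erase s(x₁, y₁)).erase s(x₂, y₂) := by
    intro t ht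
    rw [SimpleGraph.mem_edgeFinset, SimpleGraph.edgeSet_deleteEdges,
      SimpleGraph.edgeSet_deleteEdges] at ht
    obtain ⟨⟨htG, ht1⟩, ht2⟩ := ht
    rw [Finset.mem_erase, Finset.mem_erase, SimpleGraph.mem_edgeFinset]
    exact ⟨by simpa using ht2, by simpa using ht1, htG⟩
  have hcard2 : ((G.edgeFinset.erase s(x₁, y₁)).erase s(x₂, y₂)).card = G.edgeFinset.card - 2 := by
    rw [Finset.card_erase_of_mem h2, Finset.card_erase_of_mem h1]
    omega
  have hle := Finset.card_le_card hefin
  have hle2 : Fintype.card V - 1 ≤ ((G.edgeFinset.erase s(x₁, y₁)).erase s(x₂, y₂)).card :=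
    le_trans hbound (le_of_eq_of_le (by congr!) hle)
  omega

private lemma gmmn_path_loop_length {u : V} (r : G.Walk u u) (h : r.IsPath) : r.length = 0 := by
  cases r with
  | nil => rfl
  | cons hadj p =>
    rw [Walk.cons_isPath_iff] at h
    exact absurd p.end_mem_support h.2

private lemma gmmn_rear_decomp {A B : V} (r : G.Walk A B) :
    (∃ _ : B = A, r.length = 0) ∨
      ∃ (w : V) (r' : G.Walk A w) (h : G.Adj w B), r = r'.concat h := by
  cases hr : r.reverse with
  | nil =>
    left
    refine ⟨rfl, ?_⟩
    have := Walk.length_reverse r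
    rw [hr] at this
    simpa using this.symm
  | @cons _ w _ h' p =>
    right
    refine ⟨w, p.reverse, h'.symm, ?_⟩
    rw [← Walk.reverse_reverse r, hr, Walk.reverse_cons, Walk.concat_eq_append]

private lemma gmmn_front_decomp {A B : V} (r : G.Walk A B) :
    (∃ _ : A = B, r.length = 0) ∨
      ∃ (w : V) (h : G.Adj A w) (r' : G.Walk w B), r = Walk.cons h r' := by
  cases r with
  | nil => exact Or.inl ⟨rfl, rfl⟩
  | cons h p => exact Or.inr ⟨_, h, p, rfl⟩

private lemma gmmn_cycle_decompose {x : V} (c : G.Walk x x) (hc : c.IsCycle) :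
    ∃ (w₁ w₂ : V) (r : G.Walk w₁ w₂) (_ : G.Adj x w₁) (_ : G.Adj w₂ x),
      w₁ ≠ w₂ ∧ r.IsPath ∧ x ∉ r.support ∧ c.support = x :: (r.support ++ [x]) := by
  have h3 := hc.three_le_length
  cases c with
  | nil => simp at h3
  | @cons _ w₁ _ h p =>
    rcases gmmn_rear_decomp p with ⟨he, hlen⟩ | ⟨w₂, r, h₂, hp⟩
    · rw [Walk.length_cons, hlen] at h3
      omega
    · subst hp
      have hnd : (Walk.cons h (r.concat h₂)).support.tail.Nodup := hc.support_nodup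
      rw [Walk.support_cons, List.tail_cons, Walk.support_concat,
        List.nodup_append] at hnd
      obtain ⟨hrnd, _, hdisj⟩ := hnd
      have hxr : x ∉ r.support := fun hx => hdisj x hx x (by simp) rfl
      have hrp : r.IsPath := (Walk.isPath_def r).2 hrnd
      have hne : w₁ ≠ w₂ := by
        intro heq
        subst heq
        have h0 := gmmn_path_loop_length r hrp
        rw [Walk.length_cons, Walk.length_concat, h0] at h3
        omega
      exact ⟨w₁, w₂, r, h, h₂, hne, hrp, hxr, by
        rw [Walk.support_cons, Walk.support_concat]⟩

private lemma gmmn_lift_walk {α : Type} {G : SimpleGraph α} {s : Finset α}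
    {H : SimpleGraph {a : α // a ∈ s}}
    (hH : ∀ u w : {a : α // a ∈ s}, G.Adj u.1 w.1 → H.Adj u w) :
    ∀ {A B : α} (p : G.Walk A B) (_ : ∀ x ∈ p.support, x ∈ s) (hA : A ∈ s) (hB : B ∈ s),
    ∃ q : H.Walk ⟨A, hA⟩ ⟨B, hB⟩, q.support.map Subtype.val = p.support ∧
      q.edges.map (Sym2.map Subtype.val) = p.edges := by
  intro A B p
  induction p with
  | nil =>
    intro _ hA hB
    exact ⟨Walk.nil, by simp, by simp⟩
  | @cons A' w B' h p ih =>
    intro hp hA hB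
    have hw : w ∈ s := hp w (by simp [Walk.support_cons])
    obtain ⟨q, hs1, hs2⟩ := ih (fun t ht => hp t (by simp [Walk.support_cons]; right; exact ht)) hw hB
    refine ⟨Walk.cons (hH _ _ h) q, ?_, ?_⟩
    · rw [Walk.support_cons, List.map_cons, hs1, Walk.support_cons]
    · rw [Walk.edges_cons, List.map_cons, hs2, Walk.edges_cons, Sym2.map_pair_eq]

private lemma gmmn_cycle_of_lists {α β : Type} {H : SimpleGraph α} {G : SimpleGraph β}
    {x : α} {y : β} {f : α → β} (q : H.Walk x x) (p : G.Walk y y)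
    (hsup : q.support.map f = p.support) (hedg : q.edges.map (Sym2.map f) = p.edges)
    (hp : p.IsCycle) : q.IsCycle := by
  have hq3 : 3 ≤ q.length := by
    have h3 := hp.three_le_length
    have hl : q.length = p.length := by
      rw [← Walk.length_edges, ← Walk.length_edges, ← hedg, List.length_map]
    omega
  refine ⟨⟨⟨?_⟩, ?_⟩, ?_⟩
  · have : (q.edges.map (Sym2.map f)).Nodup := by rw [hedg]; exact hp.isTrail.edges_nodup
    exact this.of_map _
  · intro h
    rw [h] at hq3
    simp at hq3
  · have := hp.support_nodup
    rw [← hsup] at this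
    have h2 : (q.support.tail.map f).Nodup := by
      rw [List.map_tail]
      exact this
    exact h2.of_map _

private lemma gmmn_build_walk {α : Type} {G : SimpleGraph α} (g : ℕ → α)
    (h : ∀ i, G.Adj (g i) (g (i + 1))) : ∀ n, ∃ w : G.Walk (g 0) (g n),
      w.support = (List.range (n + 1)).map g ∧
      w.edges = (List.range n).map (fun i => s(g i, g (i + 1))) := by
  intro n
  induction n with
  | zero => exact ⟨Walk.nil, by simp [List.range_succ], by simp⟩
  | succ k ih =>
    obtain ⟨w, h1, h2⟩ := ih
    refine ⟨w.concat (h k), ?_, ?_⟩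
    · rw [Walk.support_concat, h1]
      simp [List.range_succ]
    · rw [Walk.edges_concat, h2]
      simp [List.range_succ]

/-! geometry helpers -/

private lemma gmmn_inBox_iff {p r : Point} (h : p ≤ r) (z : Point) :
    inBox p r z ↔ p ≤ z ∧ z ≤ r := by
  unfold inBox
  rw [inf_eq_left.mpr h, sup_eq_right.mpr h]

private lemma gmmn_boxMono {lo hi lo' hi' : Point} (h1 : lo' ≤ lo) (h2 : hi ≤ hi')
    (h : lo ≤ hi) (h' : lo' ≤ hi') (z : Point) : inBox lo hi z → inBox lo' hi' z := by
  rw [gmmn_inBox_iff h, gmmn_inBox_iff h']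
  exact fun hz => ⟨h1.trans hz.1, hz.2.trans h2⟩

private lemma gmmn_IGAdj_symm {P : Inst} {u w : Point × Point} (h : IGAdj P u w) :
    IGAdj P w u := by
  obtain ⟨hne, p, q, he, h1, h2, h3, h4⟩ := h
  exact ⟨hne.symm, p, q, he, h3, h4, h1, h2⟩

private lemma gmmn_hanan_symm {P : Inst} {p q : Point} (h : IsHananEdge P p q) :
    IsHananEdge P q p := by
  obtain ⟨h1, h2, h3, h4, h5⟩ := h
  refine ⟨h2, h1, h3.symm, ?_, fun z hz hb => ?_⟩
  · rcases h4 with h4 | h4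
    · exact Or.inl h4.symm
    · exact Or.inr h4.symm
  · have hb' : inBox p q z := by
      unfold inBox at hb ⊢
      rw [inf_comm, sup_comm] at hb
      exact hb
    exact (h5 z hz hb').symm

private lemma gmmn_pointBox {P : Inst} (A : Point) (w : Point × Point) :
    ¬ IGAdj P (A, A) w := by
  rintro ⟨hne, p, p', he, b1, b2, _, _⟩
  have hp : p = A := le_antisymm (by simpa using b1.2) (by simpa using b1.1)
  have hp' : p' = A := le_antisymm (by simpa using b2.2) (by simpa using b2.1)
  exact he.2.2.1 (hp.trans hp'.symm)

/-- The intersection-graph adjacency as a graph on all pairs of points. -/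
private lemma gmmn_mem_congr {α : Type} {a b : α} {l : List α} (h : a = b) (hb : b ∈ l) :
    a ∈ l := h ▸ hb

private lemma gmmn_mem_four {α : Type} [DecidableEq α] {a b c d t : α}
    (h : t ∈ ({a, b, c, d} : Finset α)) : t = a ∨ t = b ∨ t = c ∨ t = d := by
  simpa using h

private def IGfull (P : Inst) : SimpleGraph (Point × Point) where
  Adj u v := IGAdj P u v
  symm := ⟨fun _ _ h => gmmn_IGAdj_symm h⟩
  loopless := ⟨fun u h => h.1 rfl⟩

end GMMNaux


set_option maxHeartbeats 1000000 in
open SimpleGraph Walk in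
private theorem gmmn_core
    (P : Inst)
    (hconn : (IG P).Connected)
    (htf : (IG P).CliqueFree 3)
    (hunicyclic : ((IG P).edgeSet).ncard = P.card)
    (m : ℕ) (hm : 4 ≤ m) (c : ℕ → Point × Point)
    (hcP : ∀ i < m, c i ∈ P)
    (hcinj : ∀ i < m, ∀ j < m, c i = c j → i = j)
    (hccycle : ∀ i < m, IGAdj P (c i) (c ((i + 1) % m)))
    (v u₁ u₂ : Point × Point)
    (hv : v = c 0) (hu₁ : u₁ = c 1) (hu₂ : u₂ = c (m - 1))
    (hvP : v ∈ P)
    (qm q qp : Point)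
    (o1 : v.1 ≤ qm) (o2 : qm ≤ q) (o3 : q ≤ qp) (o4 : qp ≤ v.2)
    (dPoint : qm = q → q = v.1)
    (dHV1 : qm ∈ hananV P) (dHV2 : q ∈ hananV P) (dHV3 : qp ∈ hananV P)
    (dHE1 : qm ≠ q → IsHananEdge P qm q)
    (dHE2 : IsHananEdge P q qp)
    (dSeg1 : ∀ z ∈ hananV P, qm ≤ z → z ≤ q → z = qm ∨ z = q)
    (dSeg2 : ∀ z ∈ hananV P, q ≤ z → z ≤ qp → z = q ∨ z = qp)
    (dU2 : qm.1 < (u₂.1 ⊓ u₂.2).1)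
    (dU1 : q ≤ u₁.1 ⊔ u₁.2)
    (dZ4 : (u₁.1 ⊔ u₁.2).1 < qp.1 ∨ (u₁.1 ⊔ u₁.2).2 < qp.2 ∨ (u₂.1 ⊔ u₂.2).2 < qp.2)
    (Pt : Inst)
    (hPt : Pt = (P.erase v) ∪ {(v.1, qm), (qm, q), (q, qp), (qp, v.2)}) :
    (IG Pt).IsAcyclic := by
  classical
  have hm0 : 0 < m := by omega
  have hu₁P : u₁ ∈ P := hu₁ ▸ hcP 1 (by omega)
  have hu₂P : u₂ ∈ P := hu₂ ▸ hcP (m - 1) (by omega)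
  have hu₁v : u₁ ≠ v := fun h => by
    have := hcinj 1 (by omega) 0 (by omega) (by rw [← hu₁, ← hv, h])
    omega
  have hu₂v : u₂ ≠ v := fun h => by
    have := hcinj (m - 1) (by omega) 0 (by omega) (by rw [← hu₂, ← hv, h])
    omega
  have o12 : v.1 ≤ q := o1.trans o2
  have o34 : q ≤ v.2 := o3.trans o4
  have hvv : v.1 ≤ v.2 := o12.trans o34
  have hz1Pt : ((v.1, qm) : Point × Point) ∈ Pt := by
    rw [hPt]
    exact Finset.mem_union_right _ (Finset.mem_insert_self _ _)
  have hz2Pt : ((qm, q) : Point × Point) ∈ Pt := by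
    rw [hPt]
    exact Finset.mem_union_right _ (Finset.mem_insert_of_mem (Finset.mem_insert_self _ _))
  have hz3Pt : ((q, qp) : Point × Point) ∈ Pt := by
    rw [hPt]
    exact Finset.mem_union_right _
      (Finset.mem_insert_of_mem (Finset.mem_insert_of_mem (Finset.mem_insert_self _ _)))
  have hz4Pt : ((qp, v.2) : Point × Point) ∈ Pt := by
    rw [hPt]
    exact Finset.mem_union_right _
      (Finset.mem_insert_of_mem (Finset.mem_insert_of_mem (Finset.mem_insert_of_mem
        (Finset.mem_singleton_self _))))
  have hsplit : ∀ t ∈ Pt, t ∈ P.erase v ∨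
      t = (v.1, qm) ∨ t = (qm, q) ∨ t = (q, qp) ∨ t = (qp, v.2) := by
    intro t ht
    rw [hPt, Finset.mem_union] at ht
    rcases ht with h | h
    · exact Or.inl h
    · exact Or.inr (gmmn_mem_four h)
  -- the Hanan grid is unchanged
  have hVeq : hananV Pt = hananV P := by
    unfold hananV at dHV1 dHV2 dHV3 ⊢
    obtain ⟨hqm1, hqm2⟩ := Finset.mem_product.1 dHV1
    obtain ⟨hq1, hq2⟩ := Finset.mem_product.1 dHV2
    obtain ⟨hqp1, hqp2⟩ := Finset.mem_product.1 dHV3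
    have hXeq : ((Pt.image fun z => z.1.1) ∪ (Pt.image fun z => z.2.1)) =
        ((P.image fun z => z.1.1) ∪ (P.image fun z => z.2.1)) := by
      apply Finset.ext
      intro s
      simp only [Finset.mem_union, Finset.mem_image]
      constructor
      · rintro (⟨w, hw, rfl⟩ | ⟨w, hw, rfl⟩) <;>
          rcases hsplit w hw with hold | rfl | rfl | rfl | rfl
        · exact Or.inl ⟨w, Finset.mem_of_mem_erase hold, rfl⟩
        · exact Or.inl ⟨v, hvP, rfl⟩
        · simpa [Finset.mem_union, Finset.mem_image] using hqm1
        · simpa [Finset.mem_union, Finset.mem_image] using hq1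
        · simpa [Finset.mem_union, Finset.mem_image] using hqp1
        · exact Or.inr ⟨w, Finset.mem_of_mem_erase hold, rfl⟩
        · simpa [Finset.mem_union, Finset.mem_image] using hqm1
        · simpa [Finset.mem_union, Finset.mem_image] using hq1
        · simpa [Finset.mem_union, Finset.mem_image] using hqp1
        · exact Or.inr ⟨v, hvP, rfl⟩
      · rintro (⟨w, hw, rfl⟩ | ⟨w, hw, rfl⟩)
        · rcases eq_or_ne w v with rfl | hne
          · exact Or.inl ⟨(w.1, qm), hz1Pt, rfl⟩
          · exact Or.inl ⟨w, by rw [hPt, Finset.mem_union]; exact Or.inl (Finset.mem_erase.2 ⟨hne, hw⟩), rfl⟩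
        · rcases eq_or_ne w v with rfl | hne
          · exact Or.inr ⟨(qp, w.2), hz4Pt, rfl⟩
          · exact Or.inr ⟨w, by rw [hPt, Finset.mem_union]; exact Or.inl (Finset.mem_erase.2 ⟨hne, hw⟩), rfl⟩
    have hYeq : ((Pt.image fun z => z.1.2) ∪ (Pt.image fun z => z.2.2)) =
        ((P.image fun z => z.1.2) ∪ (P.image fun z => z.2.2)) := by
      apply Finset.ext
      intro s
      simp only [Finset.mem_union, Finset.mem_image]
      constructor
      · rintro (⟨w, hw, rfl⟩ | ⟨w, hw, rfl⟩) <;>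
          rcases hsplit w hw with hold | rfl | rfl | rfl | rfl
        · exact Or.inl ⟨w, Finset.mem_of_mem_erase hold, rfl⟩
        · exact Or.inl ⟨v, hvP, rfl⟩
        · simpa [Finset.mem_union, Finset.mem_image] using hqm2
        · simpa [Finset.mem_union, Finset.mem_image] using hq2
        · simpa [Finset.mem_union, Finset.mem_image] using hqp2
        · exact Or.inr ⟨w, Finset.mem_of_mem_erase hold, rfl⟩
        · simpa [Finset.mem_union, Finset.mem_image] using hqm2
        · simpa [Finset.mem_union, Finset.mem_image] using hq2
        · simpa [Finset.mem_union, Finset.mem_image] using hqp2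
        · exact Or.inr ⟨v, hvP, rfl⟩
      · rintro (⟨w, hw, rfl⟩ | ⟨w, hw, rfl⟩)
        · rcases eq_or_ne w v with rfl | hne
          · exact Or.inl ⟨(w.1, qm), hz1Pt, rfl⟩
          · exact Or.inl ⟨w, by rw [hPt, Finset.mem_union]; exact Or.inl (Finset.mem_erase.2 ⟨hne, hw⟩), rfl⟩
        · rcases eq_or_ne w v with rfl | hne
          · exact Or.inr ⟨(qp, w.2), hz4Pt, rfl⟩
          · exact Or.inr ⟨w, by rw [hPt, Finset.mem_union]; exact Or.inl (Finset.mem_erase.2 ⟨hne, hw⟩), rfl⟩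
    rw [hXeq, hYeq]
  have hHEeq : ∀ p1 p2 : Point, IsHananEdge Pt p1 p2 ↔ IsHananEdge P p1 p2 := by
    intro p1 p2
    unfold IsHananEdge
    rw [hVeq]
  have hAdjEq : ∀ w1 w2 : Point × Point, IGAdj Pt w1 w2 ↔ IGAdj P w1 w2 := by
    intro w1 w2
    unfold IGAdj
    constructor
    · rintro ⟨hne, p1, p2, he, b1, b2, b3, b4⟩
      exact ⟨hne, p1, p2, (hHEeq _ _).1 he, b1, b2, b3, b4⟩
    · rintro ⟨hne, p1, p2, he, b1, b2, b3, b4⟩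
      exact ⟨hne, p1, p2, (hHEeq _ _).2 he, b1, b2, b3, b4⟩
  -- geometric lemmas about the four new pairs
  have hzBox : ∀ z : Point × Point,
      (z = (v.1, qm) ∨ z = (qm, q) ∨ z = (q, qp) ∨ z = (qp, v.2)) →
      (z.1 ≤ z.2 ∧ v.1 ≤ z.1 ∧ z.2 ≤ v.2) := by
    intro z hz
    rcases hz with rfl | rfl | rfl | rfl
    · exact ⟨o1, le_refl _, o2.trans o34⟩
    · exact ⟨o2, o1, o34⟩
    · exact ⟨o3, o12, o4⟩
    · exact ⟨o4, o12.trans o3, le_refl _⟩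
  have E2 : ∀ z w : Point × Point,
      (z = (v.1, qm) ∨ z = (qm, q) ∨ z = (q, qp) ∨ z = (qp, v.2)) →
      IGAdj P z w → w ≠ v → IGAdj P v w := by
    intro z w hz hadj hwv
    obtain ⟨hzo, hz1, hz2⟩ := hzBox z hz
    obtain ⟨hne, p1, p2, he, b1, b2, b3, b4⟩ := hadj
    exact ⟨Ne.symm hwv, p1, p2, he, gmmn_boxMono hz1 hz2 hzo hvv p1 b1,
      gmmn_boxMono hz1 hz2 hzo hvv p2 b2, b3, b4⟩
  have thin : ∀ {l1 h1 l2 h2 : Point}, l1 ≤ h1 → l2 ≤ h2 → h1 ≤ l2 →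
      ¬ IGAdj P (l1, h1) (l2, h2) := by
    rintro l1 h1 l2 h2 ho1 ho2 hbet ⟨hne, p1, p2, he, b1, b2, b3, b4⟩
    have e1 : p1 = h1 := by
      have hb1 := (gmmn_inBox_iff ho1 p1).1 b1
      have hb3 := (gmmn_inBox_iff ho2 p1).1 b3
      exact le_antisymm hb1.2 (hbet.trans hb3.1)
    have e2 : p2 = h1 := by
      have hb2 := (gmmn_inBox_iff ho1 p2).1 b2
      have hb4 := (gmmn_inBox_iff ho2 p2).1 b4
      exact le_antisymm hb2.2 (hbet.trans hb4.1)
    exact he.2.2.1 (e1.trans e2.symm)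
  have E3 : ∀ z z' : Point × Point,
      (z = (v.1, qm) ∨ z = (qm, q) ∨ z = (q, qp) ∨ z = (qp, v.2)) →
      (z' = (v.1, qm) ∨ z' = (qm, q) ∨ z' = (q, qp) ∨ z' = (qp, v.2)) →
      ¬ IGAdj P z z' := by
    intro z z' hz hz' hadj
    rcases eq_or_ne z z' with rfl | hne
    · exact hadj.1 rfl
    rcases hz with rfl | rfl | rfl | rfl <;> rcases hz' with rfl | rfl | rfl | rfl
    · exact absurd rfl hne
    · exact thin o1 o2 (le_refl qm) hadj
    · exact thin o1 o3 o2 hadj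
    · exact thin o1 o4 (o2.trans o3) hadj
    · exact thin o1 o2 (le_refl qm) (gmmn_IGAdj_symm hadj)
    · exact absurd rfl hne
    · exact thin o2 o3 (le_refl q) hadj
    · exact thin o2 o4 o3 hadj
    · exact thin o1 o3 o2 (gmmn_IGAdj_symm hadj)
    · exact thin o2 o3 (le_refl q) (gmmn_IGAdj_symm hadj)
    · exact absurd rfl hne
    · exact thin o3 o4 (le_refl qp) hadj
    · exact thin o1 o4 (o2.trans o3) (gmmn_IGAdj_symm hadj)
    · exact thin o2 o4 o3 (gmmn_IGAdj_symm hadj)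
    · exact thin o3 o4 (le_refl qp) (gmmn_IGAdj_symm hadj)
    · exact absurd rfl hne
  have E5 : ∀ t : Point × Point, (t = (qm, q) ∨ t = (q, qp)) →
      ∀ w w' : Point × Point, w ≠ w' → IGAdj P t w → IGAdj P t w' → IGAdj P w w' := by
    intro t ht w w' hne h1 h2
    have key : ∀ u : Point × Point, IGAdj P t u →
        inBox u.1 u.2 t.1 ∧ inBox u.1 u.2 t.2 ∧ t.1 ≠ t.2 ∧ IsHananEdge P t.1 t.2 := by
      intro u hu
      obtain ⟨hneu, p1, p2, he, b1, b2, b3, b4⟩ := hu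
      have hpne := he.2.2.1
      rcases ht with rfl | rfl
      · have hc1 := (gmmn_inBox_iff o2 p1).1 b1
        have hc2 := (gmmn_inBox_iff o2 p2).1 b2
        have hp1 : p1 = qm ∨ p1 = q := dSeg1 p1 he.1 hc1.1 hc1.2
        have hp2 : p2 = qm ∨ p2 = q := dSeg1 p2 he.2.1 hc2.1 hc2.2
        rcases hp1 with rfl | rfl <;> rcases hp2 with rfl | rfl
        · exact absurd rfl hpne
        · exact ⟨b3, b4, hpne, he⟩
        · exact ⟨b4, b3, hpne.symm, gmmn_hanan_symm he⟩
        · exact absurd rfl hpne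
      · have hc1 := (gmmn_inBox_iff o3 p1).1 b1
        have hc2 := (gmmn_inBox_iff o3 p2).1 b2
        have hp1 : p1 = q ∨ p1 = qp := dSeg2 p1 he.1 hc1.1 hc1.2
        have hp2 : p2 = q ∨ p2 = qp := dSeg2 p2 he.2.1 hc2.1 hc2.2
        rcases hp1 with rfl | rfl <;> rcases hp2 with rfl | rfl
        · exact absurd rfl hpne
        · exact ⟨b3, b4, hpne, he⟩
        · exact ⟨b4, b3, hpne.symm, gmmn_hanan_symm he⟩
        · exact absurd rfl hpne
    obtain ⟨k1, k2, kne, kHE⟩ := key w h1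
    obtain ⟨k1', k2', _, _⟩ := key w' h2
    exact ⟨hne, t.1, t.2, kHE, k1, k2, k1', k2'⟩
  have E6 : ∀ w : Point × Point, IGAdj P (v.1, qm) w → IGAdj P (qp, v.2) w →
      inBox w.1 w.2 qm ∧ inBox w.1 w.2 q ∧ inBox w.1 w.2 qp := by
    intro w ha hb
    obtain ⟨_, p1, _, _, b1, _, b3, _⟩ := ha
    obtain ⟨_, p2, _, _, c1, _, c3, _⟩ := hb
    have hp1 : p1 ≤ qm := ((gmmn_inBox_iff o1 p1).1 b1).2
    have hp2 : qp ≤ p2 := ((gmmn_inBox_iff o4 p2).1 c1).1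
    have hlow : w.1 ⊓ w.2 ≤ qm := le_trans b3.1 hp1
    have hhigh : qp ≤ w.1 ⊔ w.2 := le_trans hp2 c3.2
    exact ⟨⟨hlow, le_trans (o2.trans o3) hhigh⟩,
      ⟨le_trans hlow o2, le_trans o3 hhigh⟩,
      ⟨le_trans hlow (o2.trans o3), hhigh⟩⟩
  have E7 : ∀ w w' : Point × Point, w ≠ w' → IGAdj P (v.1, qm) w → IGAdj P (qp, v.2) w →
      IGAdj P (v.1, qm) w' → IGAdj P (qp, v.2) w' → IGAdj P w w' := by
    intro w w' hne h1 h2 h3 h4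
    obtain ⟨_, hq, hqp'⟩ := E6 w h1 h2
    obtain ⟨_, hq', hqp''⟩ := E6 w' h3 h4
    exact ⟨hne, q, qp, dHE2, hq, hqp', hq', hqp''⟩
  have E8 : ∀ w : Point × Point, IGAdj P (v.1, qm) u₁ → IGAdj P (v.1, qm) w →
      IGAdj P (qp, v.2) w → w ≠ u₁ → IGAdj P w u₁ := by
    intro w hadjU hw1 hw4 hne
    have hqmq : qm ≠ q := by
      intro h
      have hq' : q = v.1 := dPoint h
      rw [h, hq'] at hadjU
      exact gmmn_pointBox v.1 u₁ hadjU
    obtain ⟨hqmW, hqW, _⟩ := E6 w hw1 hw4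
    obtain ⟨_, p1, _, _, b1, _, b3, _⟩ := hadjU
    have hp1 : p1 ≤ qm := ((gmmn_inBox_iff o1 p1).1 b1).2
    have hlow : u₁.1 ⊓ u₁.2 ≤ qm := le_trans b3.1 hp1
    have hqmU : inBox u₁.1 u₁.2 qm := ⟨hlow, o2.trans dU1⟩
    have hqU : inBox u₁.1 u₁.2 q := ⟨le_trans hlow o2, dU1⟩
    exact ⟨hne, qm, q, dHE1 hqmq, hqmW, hqW, hqmU, hqU⟩
  have E9 : ¬ IGAdj P (v.1, qm) u₂ := by
    rintro ⟨_, p1, _, _, b1, _, b3, _⟩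
    have hp1 : p1 ≤ qm := ((gmmn_inBox_iff o1 p1).1 b1).2
    have hlow : (u₂.1 ⊓ u₂.2).1 ≤ p1.1 := b3.1.1
    have := hp1.1
    linarith [dU2]
  have E10 : ¬ IGAdj P (qp, v.2) u₁ ∨ ¬ IGAdj P (qp, v.2) u₂ := by
    rcases dZ4 with hd | hd | hd
    · left
      rintro ⟨_, p1, _, _, b1, _, b3, _⟩
      have h1 : qp ≤ p1 := ((gmmn_inBox_iff o4 p1).1 b1).1
      have h2 : p1 ≤ u₁.1 ⊔ u₁.2 := b3.2
      have := h1.1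
      have := h2.1
      linarith
    · left
      rintro ⟨_, p1, _, _, b1, _, b3, _⟩
      have h1 : qp ≤ p1 := ((gmmn_inBox_iff o4 p1).1 b1).1
      have h2 : p1 ≤ u₁.1 ⊔ u₁.2 := b3.2
      have := h1.2
      have := h2.2
      linarith
    · right
      rintro ⟨_, p1, _, _, b1, _, b3, _⟩
      have h1 : qp ≤ p1 := ((gmmn_inBox_iff o4 p1).1 b1).1
      have h2 : p1 ≤ u₂.1 ⊔ u₂.2 := b3.2
      have := h1.2
      have := h2.2
      linarith
  have mkTri : ∀ w w' : Point × Point, w ∈ P → w' ∈ P → w ≠ w' → w ≠ v → w' ≠ v →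
      IGAdj P v w → IGAdj P v w' → IGAdj P w w' → False := by
    intro w w' hw hw' hww' hwv hw'v h1 h2 h3
    have hne1 : (⟨w, hw⟩ : {p : Point × Point // p ∈ P}) ∉
        ({⟨w', hw'⟩} : Finset {p : Point × Point // p ∈ P}) := by
      simp only [Finset.mem_singleton]
      exact fun h => hww' (congrArg Subtype.val h)
    have hne2 : (⟨v, hvP⟩ : {p : Point × Point // p ∈ P}) ∉
        (insert ⟨w, hw⟩ {⟨w', hw'⟩} : Finset {p : Point × Point // p ∈ P}) := by
      simp only [Finset.mem_insert, Finset.mem_singleton]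
      push_neg
      exact ⟨fun h => hwv (congrArg Subtype.val h).symm, fun h => hw'v (congrArg Subtype.val h).symm⟩
    refine htf {⟨v, hvP⟩, ⟨w, hw⟩, ⟨w', hw'⟩} ⟨?_, ?_⟩
    · intro x hx y hy hxy
      simp only [Finset.coe_insert, Set.mem_insert_iff, Finset.coe_singleton,
        Set.mem_singleton_iff] at hx hy
      rcases hx with rfl | rfl | rfl <;> rcases hy with rfl | rfl | rfl
      · exact absurd rfl hxy
      · exact h1
      · exact h2
      · exact gmmn_IGAdj_symm h1
      · exact absurd rfl hxy
      · exact h3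
      · exact gmmn_IGAdj_symm h2
      · exact gmmn_IGAdj_symm h3
      · exact absurd rfl hxy
    · rw [Finset.card_insert_of_notMem hne2, Finset.card_insert_of_notMem hne1,
        Finset.card_singleton]
  -- the cycle C in IG P
  have hmlt : ∀ i : ℕ, i % m < m := fun i => Nat.mod_lt i hm0
  set g : ℕ → {x : Point × Point // x ∈ P} := fun i => ⟨c (i % m), hcP _ (hmlt i)⟩ with hgdef
  have hgadj : ∀ i, (IG P).Adj (g i) (g (i + 1)) := by
    intro i
    have h := hccycle (i % m) (hmlt i)
    have hmod : (i % m + 1) % m = (i + 1) % m := by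
      conv_rhs => rw [Nat.add_mod]
      rw [Nat.mod_eq_of_lt (show 1 < m by omega)]
    show IGAdj P (c (i % m)) (c ((i + 1) % m))
    rw [← hmod]
    exact h
  obtain ⟨C0, hC0sup, hC0edg⟩ := gmmn_build_walk g hgadj m
  have hgm : g m = g 0 := Subtype.ext (by show c (m % m) = c (0 % m); rw [Nat.mod_self, Nat.zero_mod])
  set C : (IG P).Walk (g 0) (g 0) := C0.copy rfl hgm with hCdef
  have hCsup : C.support = (List.range (m + 1)).map g := by
    rw [hCdef, Walk.support_copy, hC0sup]
  have hCedg : C.edges = (List.range m).map (fun i => s(g i, g (i + 1))) := by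
    rw [hCdef, Walk.edges_copy, hC0edg]
  have hginj : ∀ i j, i < m → j < m → g i = g j → i = j := by
    intro i j hi hj h
    have hc' : c (i % m) = c (j % m) := congrArg Subtype.val h
    rw [Nat.mod_eq_of_lt hi, Nat.mod_eq_of_lt hj] at hc'
    exact hcinj i hi j hj hc'
  have hmodsucc : ∀ i, i < m → (i + 1) % m = if i + 1 = m then 0 else i + 1 := by
    intro i hi
    by_cases h : i + 1 = m
    · simp [h, Nat.mod_self]
    · rw [if_neg h, Nat.mod_eq_of_lt (by omega)]
  have hgsuccinj : ∀ i j, i < m → j < m → g (i + 1) = g (j + 1) → i = j := by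
    intro i j hi hj h
    have h1 : g ((i + 1) % m) = g ((j + 1) % m) := by
      have e1 : g ((i + 1) % m) = g (i + 1) := Subtype.ext (by
        show c ((i + 1) % m % m) = c ((i + 1) % m)
        rw [Nat.mod_eq_of_lt (hmlt _)])
      have e2 : g ((j + 1) % m) = g (j + 1) := Subtype.ext (by
        show c ((j + 1) % m % m) = c ((j + 1) % m)
        rw [Nat.mod_eq_of_lt (hmlt _)])
      rw [e1, e2]; exact h
    have h2 := hginj _ _ (hmlt (i + 1)) (hmlt (j + 1)) h1
    rw [hmodsucc i hi, hmodsucc j hj] at h2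
    split_ifs at h2 <;> omega
  have hCcyc : C.IsCycle := by
    refine ⟨⟨⟨?_⟩, ?_⟩, ?_⟩
    · rw [hCedg]
      refine List.Nodup.map_on ?_ List.nodup_range
      intro i hi j hj hij
      rw [List.mem_range] at hi hj
      rw [Sym2.eq_iff] at hij
      rcases hij with ⟨h1, _⟩ | ⟨h1, h2⟩
      · exact hginj i j hi hj h1
      · -- g i = g (j+1) and g (i+1) = g j
        have e1 : g ((j + 1) % m) = g (j + 1) := Subtype.ext (by
          show c ((j + 1) % m % m) = c ((j + 1) % m)
          rw [Nat.mod_eq_of_lt (hmlt _)])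
        have e2 : g ((i + 1) % m) = g (i + 1) := Subtype.ext (by
          show c ((i + 1) % m % m) = c ((i + 1) % m)
          rw [Nat.mod_eq_of_lt (hmlt _)])
        have q1 : i = (j + 1) % m := hginj i _ hi (hmlt _) (by rw [e1]; exact h1)
        have q2 : (i + 1) % m = j := hginj _ j (hmlt _) hj (by rw [e2]; exact h2)
        rw [hmodsucc j hj] at q1
        rw [hmodsucc i hi] at q2
        split_ifs at q1 q2 <;> omega
    · intro hnil
      have : C.edges = [] := by rw [hnil]; rfl
      rw [hCedg] at this
      have := congrArg List.length this
      simp at this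
      omega
    · rw [hCsup]
      have hrw : (List.range (m + 1)).map g = g 0 :: (List.range m).map (fun k => g (k + 1)) := by
        rw [List.range_succ_eq_map, List.map_cons, List.map_map]
        rfl
      rw [hrw, List.tail_cons]
      refine List.Nodup.map_on ?_ List.nodup_range
      intro i hi j hj hij
      rw [List.mem_range] at hi hj
      exact hgsuccinj i j hi hj hij
  have edgeChar : ∀ e : Sym2 {x : Point × Point // x ∈ P}, e ∈ C.edges →
      ∀ A' : Point × Point, Sym2.map Subtype.val e = s(v, A') → A' = u₁ ∨ A' = u₂ := by
    intro e he A' hmap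
    rw [hCedg, List.mem_map] at he
    obtain ⟨i, hi, rfl⟩ := he
    rw [List.mem_range] at hi
    rw [Sym2.map_pair_eq, Sym2.eq_iff] at hmap
    rcases hmap with ⟨h1, h2⟩ | ⟨h1, h2⟩
    · -- c (i % m) = v
      have hi0 : i % m = 0 := hcinj (i % m) (hmlt i) 0 (by omega) (by rw [← hv]; exact h1)
      rw [Nat.mod_eq_of_lt hi] at hi0
      subst hi0
      left
      rw [← h2]
      show c (1 % m) = u₁
      rw [Nat.mod_eq_of_lt (by omega), hu₁]
    · -- c ((i+1) % m) = v
      have hi0 : (i + 1) % m = 0 := hcinj ((i + 1) % m) (hmlt _) 0 (by omega) (by rw [← hv]; exact h2)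
      rw [hmodsucc i hi] at hi0
      split_ifs at hi0 with hcase
      · right
        rw [← h1]
        show c (i % m) = u₂
        have hieq : i = m - 1 := by omega
        rw [Nat.mod_eq_of_lt hi, hu₂, hieq]
  have hcard1 : (IG P).edgeFinset.card = P.card := by
    rw [← SimpleGraph.coe_edgeFinset, Set.ncard_coe_finset] at hunicyclic
    exact hunicyclic
  have hn2 : 2 ≤ P.card := Finset.one_lt_card.mpr ⟨v, hvP, u₁, hu₁P, Ne.symm hu₁v⟩
  have sameEdges : ∀ (x : {p : Point × Point // p ∈ P}) (S : (IG P).Walk x x), S.IsCycle →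
      ∀ e, e ∈ S.edges ↔ e ∈ C.edges := by
    intro x S hS e
    have hle : (IG P).edgeFinset.card ≤ Fintype.card {p : Point × Point // p ∈ P} := by
      rw [Fintype.card_coe, hcard1]
    have h2 : 2 ≤ Fintype.card {p : Point × Point // p ∈ P} := by
      rw [Fintype.card_coe]
      exact hn2
    constructor
    · intro h
      by_contra hn
      exact gmmn_two_cycles _ hconn hle h2 S C hS hCcyc e h hn
    · intro h
      by_contra hn
      exact gmmn_two_cycles _ hconn hle h2 C S hCcyc hS e h hn
  have hHadj : ∀ (u w : {a : Point × Point // a ∈ P}), (IGfull P).Adj u.1 w.1 →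
      (IG P).Adj u w := fun _ _ h => h
  have M : ∀ (A B : Point × Point) (r : (IGfull P).Walk A B), r.IsPath →
      (∀ t ∈ r.support, t ∈ P.erase v) → IGAdj P v A → IGAdj P v B → A ≠ B →
      (A = u₁ ∧ B = u₂) ∨ (A = u₂ ∧ B = u₁) := by
    intro A B r hrp hold hvA hvB hAB
    have hvnot : v ∉ r.support := fun h => (Finset.mem_erase.1 (hold v h)).1 rfl
    have hBv : B ≠ v := (Finset.mem_erase.1 (hold B r.end_mem_support)).1
    set S0 : (IGfull P).Walk v v :=
      Walk.cons (show (IGfull P).Adj v A from hvA)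
        (r.concat (show (IGfull P).Adj B v from gmmn_IGAdj_symm hvB)) with hS0def
    have hS0sup : S0.support = v :: (r.support ++ [v]) := by
      rw [hS0def, Walk.support_cons, Walk.support_concat]
    have hS0edg : S0.edges = s(v, A) :: (r.edges ++ [s(B, v)]) := by
      rw [hS0def, Walk.edges_cons, Walk.edges_concat, List.concat_eq_append]
    have hS0cyc : S0.IsCycle := by
      refine ⟨⟨⟨?_⟩, by rw [hS0def]; exact fun h => by simp at h⟩, ?_⟩
      · rw [hS0edg]
        refine List.nodup_cons.2 ⟨?_, ?_⟩
        · intro hmem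
          rcases List.mem_append.1 hmem with h | h
          · exact hvnot (r.fst_mem_support_of_mem_edges h)
          · rw [List.mem_singleton, Sym2.eq_iff] at h
            rcases h with ⟨h1, _⟩ | ⟨_, h2⟩
            · exact hBv h1.symm
            · exact hAB h2
        · rw [List.nodup_append]
          refine ⟨hrp.isTrail.edges_nodup, List.nodup_singleton _, ?_⟩
          intro e he b hme heb
          rw [List.mem_singleton] at hme
          rw [hme] at heb
          exact hvnot (r.snd_mem_support_of_mem_edges (heb ▸ he))
      · have htl : S0.support.tail = r.support ++ [v] := by rw [hS0sup]; rfl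
        rw [htl, List.nodup_append]
        refine ⟨(Walk.isPath_def r).1 hrp, List.nodup_singleton _, ?_⟩
        intro a ha b hmb hab
        rw [List.mem_singleton] at hmb
        rw [hmb] at hab
        exact hvnot (hab ▸ ha)
    have hsupP : ∀ t ∈ S0.support, t ∈ P := by
      intro t ht
      rw [hS0sup] at ht
      rcases List.mem_cons.1 ht with rfl | ht'
      · exact hvP
      rcases List.mem_append.1 ht' with h | h
      · exact Finset.mem_of_mem_erase (hold t h)
      · rw [List.mem_singleton] at h
        subst h
        exact hvP
    obtain ⟨S, hSsup, hSedg⟩ := gmmn_lift_walk hHadj S0 hsupP hvP hvP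
    have hScyc : S.IsCycle := gmmn_cycle_of_lists S S0 hSsup hSedg hS0cyc
    have hA' : A = u₁ ∨ A = u₂ := by
      have hmem : s(v, A) ∈ S0.edges := by rw [hS0edg]; simp
      rw [← hSedg, List.mem_map] at hmem
      obtain ⟨e, he, hfe⟩ := hmem
      exact edgeChar e ((sameEdges _ S hScyc e).1 he) A hfe
    have hB' : B = u₁ ∨ B = u₂ := by
      have hmem : s(B, v) ∈ S0.edges := by rw [hS0edg]; simp
      rw [Sym2.eq_swap] at hmem
      rw [← hSedg, List.mem_map] at hmem
      obtain ⟨e, he, hfe⟩ := hmem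
      exact edgeChar e ((sameEdges _ S hScyc e).1 he) B hfe
    rcases hA' with hA' | hA' <;> rcases hB' with hB' | hB'
    · exact absurd (hA'.trans hB'.symm) hAB
    · exact Or.inl ⟨hA', hB'⟩
    · exact Or.inr ⟨hA', hB'⟩
    · exact absurd (hA'.trans hB'.symm) hAB
  have K0 : ∀ (x0 : Point × Point) (S0 : (IGfull P).Walk x0 x0), S0.IsCycle →
      (∀ t ∈ S0.support, t ∈ P.erase v) → False := by
    intro x0 S0 hS0 hold
    have hsupP : ∀ t ∈ S0.support, t ∈ P := fun t ht => Finset.mem_of_mem_erase (hold t ht)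
    have hx0 : x0 ∈ P := hsupP x0 S0.start_mem_support
    obtain ⟨S, hSsup, hSedg⟩ := gmmn_lift_walk hHadj S0 hsupP hx0 hx0
    have hScyc := gmmn_cycle_of_lists S S0 hSsup hSedg hS0
    have hCe : s(g 0, g 1) ∈ C.edges := by
      rw [hCedg]
      exact List.mem_map.2 ⟨0, List.mem_range.2 (by omega), rfl⟩
    have hSe : s(g 0, g 1) ∈ S.edges := (sameEdges _ S hScyc _).2 hCe
    have hv0 : g 0 ∈ S.support := S.fst_mem_support_of_mem_edges hSe
    have hv1 : (g 0).1 ∈ S0.support := by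
      rw [← hSsup]
      exact List.mem_map_of_mem hv0
    have hg0v : (g 0).1 = v := by
      show c (0 % m) = v
      rw [Nat.zero_mod, ← hv]
    rw [hg0v] at hv1
    exact (Finset.mem_erase.1 (hold v hv1)).1 rfl
  -- the master argument
  intro x0 c0' hc0
  have hinj : Function.Injective (fun (a : {p : Point × Point // p ∈ Pt}) => a.1) :=
    Subtype.val_injective
  let ι : (IG Pt) →g (IGfull P) := ⟨fun a => a.1, fun {a b} h => (hAdjEq a.1 b.1).1 h⟩
  set c1 := c0'.map ι with hc1def
  have hc1 : c1.IsCycle := (Walk.map_isCycle_iff_of_injective hinj).2 hc0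
  have hsupPt : ∀ t ∈ c1.support, t ∈ Pt := by
    intro t ht
    rw [hc1def, Walk.support_map, List.mem_map] at ht
    obtain ⟨y, _, rfl⟩ := ht
    exact y.2
  have hrotmemgen : ∀ (t : Point × Point) (ht : t ∈ c1.support) (s : Point × Point),
      s ∈ (c1.rotate t ht).support → s ∈ c1.support := by
    intro t ht s hs
    rw [Walk.support_eq_cons (c1.rotate t ht)] at hs
    rcases List.mem_cons.1 hs with rfl | hs'
    · exact ht
    · have hmem := (Walk.support_rotate c1 t ht).mem_iff.1 hs'
      rw [Walk.support_eq_cons c1]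
      exact List.mem_cons_of_mem _ hmem
  have segElim : ∀ t : Point × Point, (t = (qm, q) ∨ t = (q, qp)) → t ∉ c1.support := by
    intro t htseg ht
    have ht4 : t = (v.1, qm) ∨ t = (qm, q) ∨ t = (q, qp) ∨ t = (qp, v.2) :=
      htseg.elim (fun h => Or.inr (Or.inl h)) (fun h => Or.inr (Or.inr (Or.inl h)))
    obtain ⟨w₁, w₂, r, hA1, hA2, hw12, hrp, hxr, hsupeq⟩ :=
      gmmn_cycle_decompose (c1.rotate t ht) (hc1.rotate ht)
    have hw₁c : w₁ ∈ c1.support := hrotmemgen t ht w₁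
      (by rw [hsupeq]; exact List.mem_cons_of_mem _ (List.mem_append_left _ r.start_mem_support))
    have hw₂c : w₂ ∈ c1.support := hrotmemgen t ht w₂
      (by rw [hsupeq]; exact List.mem_cons_of_mem _ (List.mem_append_left _ r.end_mem_support))
    have hw₁old : w₁ ∈ P.erase v := by
      rcases hsplit w₁ (hsupPt w₁ hw₁c) with h | h
      · exact h
      · exact absurd hA1 (E3 t w₁ ht4 h)
    have hw₂old : w₂ ∈ P.erase v := by
      rcases hsplit w₂ (hsupPt w₂ hw₂c) with h | h
      · exact h
      · exact absurd (gmmn_IGAdj_symm hA2) (E3 t w₂ ht4 h)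
    have hadjww : IGAdj P w₁ w₂ := E5 t htseg w₁ w₂ hw12 hA1 (gmmn_IGAdj_symm hA2)
    exact mkTri w₁ w₂ (Finset.mem_of_mem_erase hw₁old) (Finset.mem_of_mem_erase hw₂old) hw12
      (Finset.mem_erase.1 hw₁old).1 (Finset.mem_erase.1 hw₂old).1
      (E2 t w₁ ht4 hA1 (Finset.mem_erase.1 hw₁old).1)
      (E2 t w₂ ht4 (gmmn_IGAdj_symm hA2) (Finset.mem_erase.1 hw₂old).1) hadjww
  have hElim : ∀ t ∈ c1.support, t ∉ P.erase v → t = (v.1, qm) ∨ t = (qp, v.2) := by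
    intro t ht hnot
    rcases hsplit t (hsupPt t ht) with h | h | h | h | h
    · exact absurd h hnot
    · exact Or.inl h
    · exact absurd ht (segElim t (Or.inl h))
    · exact absurd ht (segElim t (Or.inr h))
    · exact Or.inr h
  by_cases hNew : ∃ t ∈ c1.support, t ∉ P.erase v
  swap
  · push_neg at hNew
    exact K0 _ c1 hc1 hNew
  obtain ⟨t, ht, htnot⟩ := hNew
  have httype := hElim t ht htnot
  have ht4 : t = (v.1, qm) ∨ t = (qm, q) ∨ t = (q, qp) ∨ t = (qp, v.2) :=
    httype.elim Or.inl (fun h => Or.inr (Or.inr (Or.inr h)))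
  obtain ⟨w₁, w₂, r, hA1, hA2, hw12, hrp, hxr, hsupeq⟩ :=
    gmmn_cycle_decompose (c1.rotate t ht) (hc1.rotate ht)
  have hrsub : ∀ s, s ∈ r.support → s ∈ c1.support := by
    intro s hs
    exact hrotmemgen t ht s
      (by rw [hsupeq]; exact List.mem_cons_of_mem _ (List.mem_append_left _ hs))
  have holdof : ∀ (z s : Point × Point),
      (z = (v.1, qm) ∨ z = (qm, q) ∨ z = (q, qp) ∨ z = (qp, v.2)) →
      IGAdj P z s → s ∈ c1.support → s ∈ P.erase v := by
    intro z s hz4 hadj hs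
    rcases hsplit s (hsupPt s hs) with h | h
    · exact h
    · exact absurd hadj (E3 z s hz4 h)
  have hw₁old : w₁ ∈ P.erase v := holdof t w₁ ht4 hA1 (hrsub w₁ r.start_mem_support)
  have hw₂old : w₂ ∈ P.erase v :=
    holdof t w₂ ht4 (gmmn_IGAdj_symm hA2) (hrsub w₂ r.end_mem_support)
  have hvw₁ : IGAdj P v w₁ := E2 t w₁ ht4 hA1 (Finset.mem_erase.1 hw₁old).1
  have hvw₂ : IGAdj P v w₂ :=
    E2 t w₂ ht4 (gmmn_IGAdj_symm hA2) (Finset.mem_erase.1 hw₂old).1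
  by_cases hNew2 : ∃ s ∈ r.support, s ∉ P.erase v
  swap
  · push_neg at hNew2
    have hM := M w₁ w₂ r hrp hNew2 hvw₁ hvw₂ hw12
    have hadj12 : IGAdj P t u₁ ∧ IGAdj P t u₂ := by
      rcases hM with ⟨h1', h2'⟩ | ⟨h1', h2'⟩
      · exact ⟨h1' ▸ hA1, h2' ▸ gmmn_IGAdj_symm hA2⟩
      · exact ⟨h2' ▸ gmmn_IGAdj_symm hA2, h1' ▸ hA1⟩
    rcases httype with hteq | hteq
    · rw [hteq] at hadj12
      exact E9 hadj12.2
    · rw [hteq] at hadj12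
      rcases E10 with h | h
      · exact h hadj12.1
      · exact h hadj12.2
  obtain ⟨t', ht'r, ht'not⟩ := hNew2
  have ht'type := hElim t' (hrsub t' ht'r) ht'not
  have ht4' : t' = (v.1, qm) ∨ t' = (qm, q) ∨ t' = (q, qp) ∨ t' = (qp, v.2) :=
    ht'type.elim Or.inl (fun h => Or.inr (Or.inr (Or.inr h)))
  have htt' : t ≠ t' := fun h => hxr (h ▸ ht'r)
  have hpair : (t = (v.1, qm) ∧ t' = (qp, v.2)) ∨ (t = (qp, v.2) ∧ t' = (v.1, qm)) := by
    rcases httype with h1 | h1 <;> rcases ht'type with h2 | h2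
    · exact absurd (h1.trans h2.symm) htt'
    · exact Or.inl ⟨h1, h2⟩
    · exact Or.inr ⟨h1, h2⟩
    · exact absurd (h1.trans h2.symm) htt'
  have hrnodup : r.support.Nodup := (Walk.isPath_def r).1 hrp
  have hrsupeq2 : r.support =
      (r.takeUntil t' ht'r).support ++ (r.dropUntil t' ht'r).support.tail := by
    conv_lhs => rw [← r.take_spec ht'r]
    rw [Walk.support_append]
  have hdisj : ∀ s, s ∈ (r.takeUntil t' ht'r).support →
      s ∉ (r.dropUntil t' ht'r).support.tail := by
    rw [hrsupeq2] at hrnodup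
    exact fun s h1 h2 => (List.disjoint_of_nodup_append hrnodup) h1 h2
  have hr₁p : (r.takeUntil t' ht'r).IsPath := hrp.takeUntil ht'r
  have hr₂p : (r.dropUntil t' ht'r).IsPath := hrp.dropUntil ht'r
  rcases gmmn_front_decomp (r.dropUntil t' ht'r) with ⟨heqtw, _⟩ | ⟨w₄, h₄, r₂', heq₂⟩
  · rw [← heqtw] at hA2
    exact E3 t' t ht4' ht4 hA2
  rcases gmmn_rear_decomp (r.takeUntil t' ht'r) with ⟨heqtw, _⟩ | ⟨w₃, r₁', h₃, heq₁⟩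
  · rw [← heqtw] at hA1
    exact E3 t t' ht4 ht4' hA1
  have hr₁sup : (r.takeUntil t' ht'r).support = r₁'.support ++ [t'] := by
    rw [heq₁, Walk.support_concat]
  have hr₂sup : (r.dropUntil t' ht'r).support = t' :: r₂'.support := by
    rw [heq₂, Walk.support_cons]
  have hr₁nodup : (r.takeUntil t' ht'r).support.Nodup := (Walk.isPath_def _).1 hr₁p
  have hr₂nodup : (r.dropUntil t' ht'r).support.Nodup := (Walk.isPath_def _).1 hr₂p
  have ht'r₁ : t' ∉ r₁'.support := by
    rw [hr₁sup] at hr₁nodup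
    intro hmem
    exact (List.disjoint_of_nodup_append hr₁nodup) hmem (List.mem_singleton_self t')
  have ht'r₂ : t' ∉ r₂'.support := by
    rw [hr₂sup] at hr₂nodup
    exact (List.nodup_cons.1 hr₂nodup).1
  have hr₁'p : r₁'.IsPath := by
    have hnd := hr₁nodup
    rw [hr₁sup, List.nodup_append] at hnd
    exact (Walk.isPath_def _).2 hnd.1
  have hr₂'p : r₂'.IsPath := by
    have hp := hr₂p
    rw [heq₂, Walk.cons_isPath_iff] at hp
    exact hp.1
  have hsub₁ : ∀ s, s ∈ r₁'.support → s ∈ r.support := by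
    intro s hs
    rw [hrsupeq2]
    exact List.mem_append_left _ (by rw [hr₁sup]; exact List.mem_append_left _ hs)
  have hsub₂ : ∀ s, s ∈ r₂'.support → s ∈ r.support := by
    intro s hs
    rw [hrsupeq2]
    refine List.mem_append_right _ ?_
    rw [hr₂sup]
    exact hs
  have hold₁ : ∀ s ∈ r₁'.support, s ∈ P.erase v := by
    intro s hs
    by_contra hnot
    rcases hElim s (hrsub s (hsub₁ s hs)) hnot with hval | hval
    · rcases hpair with ⟨hp1, _⟩ | ⟨_, hp2⟩
      · exact hxr (by rw [hp1, ← hval]; exact hsub₁ s hs)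
      · exact ht'r₁ (by rw [hp2, ← hval]; exact hs)
    · rcases hpair with ⟨_, hp2⟩ | ⟨hp1, _⟩
      · exact ht'r₁ (by rw [hp2, ← hval]; exact hs)
      · exact hxr (by rw [hp1, ← hval]; exact hsub₁ s hs)
  have hold₂ : ∀ s ∈ r₂'.support, s ∈ P.erase v := by
    intro s hs
    by_contra hnot
    rcases hElim s (hrsub s (hsub₂ s hs)) hnot with hval | hval
    · rcases hpair with ⟨hp1, _⟩ | ⟨_, hp2⟩
      · exact hxr (by rw [hp1, ← hval]; exact hsub₂ s hs)
      · exact ht'r₂ (by rw [hp2, ← hval]; exact hs)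
    · rcases hpair with ⟨_, hp2⟩ | ⟨hp1, _⟩
      · exact ht'r₂ (by rw [hp2, ← hval]; exact hs)
      · exact hxr (by rw [hp1, ← hval]; exact hsub₂ s hs)
  have hw₁take : w₁ ∈ (r.takeUntil t' ht'r).support := Walk.start_mem_support _
  have hw₃take : w₃ ∈ (r.takeUntil t' ht'r).support := by
    rw [hr₁sup]
    exact List.mem_append_left _ r₁'.end_mem_support
  have hw₄drop : w₄ ∈ (r.dropUntil t' ht'r).support.tail := by
    rw [hr₂sup]
    exact r₂'.start_mem_support
  have hw₂drop : w₂ ∈ (r.dropUntil t' ht'r).support.tail := by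
    rw [hr₂sup]
    exact r₂'.end_mem_support
  have hw₁w₄ : w₁ ≠ w₄ := fun h => hdisj w₁ hw₁take (gmmn_mem_congr h hw₄drop)
  have hw₃w₄ : w₃ ≠ w₄ := fun h => hdisj w₃ hw₃take (gmmn_mem_congr h hw₄drop)
  have hw₃w₂ : w₃ ≠ w₂ := fun h => hdisj w₃ hw₃take (gmmn_mem_congr h hw₂drop)
  have hw₄old : w₄ ∈ P.erase v := hold₂ w₄ r₂'.start_mem_support
  have hw₃old : w₃ ∈ P.erase v := hold₁ w₃ r₁'.end_mem_support
  have hvw₃ : IGAdj P v w₃ :=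
    E2 t' w₃ ht4' (gmmn_IGAdj_symm h₃) (Finset.mem_erase.1 hw₃old).1
  have hvw₄ : IGAdj P v w₄ := E2 t' w₄ ht4' h₄ (Finset.mem_erase.1 hw₄old).1
  by_cases hshort₁ : w₁ = w₃
  · by_cases hshort₂ : w₄ = w₂
    · -- both pieces short
      have a1 : IGAdj P t w₁ := hA1
      have a2 : IGAdj P t' w₁ := by rw [hshort₁]; exact gmmn_IGAdj_symm h₃
      have a3 : IGAdj P t' w₂ := by rw [← hshort₂]; exact h₄
      have a4 : IGAdj P t w₂ := gmmn_IGAdj_symm hA2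
      have hadjww : IGAdj P w₁ w₂ := by
        rcases hpair with ⟨hp1, hp2⟩ | ⟨hp1, hp2⟩
        · rw [hp1] at a1 a4
          rw [hp2] at a2 a3
          exact E7 w₁ w₂ hw12 a1 a2 a4 a3
        · rw [hp1] at a1 a4
          rw [hp2] at a2 a3
          exact E7 w₁ w₂ hw12 a2 a1 a3 a4
      exact mkTri w₁ w₂ (Finset.mem_of_mem_erase hw₁old) (Finset.mem_of_mem_erase hw₂old)
        hw12 (Finset.mem_erase.1 hw₁old).1 (Finset.mem_erase.1 hw₂old).1 hvw₁ hvw₂ hadjww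
    · -- first piece short, second long
      have hM := M w₄ w₂ r₂' hr₂'p hold₂ hvw₄ hvw₂ hshort₂
      have a_t'_w₁ : IGAdj P t' w₁ := by rw [hshort₁]; exact gmmn_IGAdj_symm h₃
      rcases hpair with ⟨hp1, hp2⟩ | ⟨hp1, hp2⟩
      · have hw₂u₁ : w₂ = u₁ := by
          rcases hM with ⟨_, h2'⟩ | ⟨_, h2'⟩
          · exfalso
            have hx := gmmn_IGAdj_symm hA2
            rw [hp1, h2'] at hx
            exact E9 hx
          · exact h2'
        have hadjz1u₁ : IGAdj P (v.1, qm) u₁ := by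
          have hx := gmmn_IGAdj_symm hA2
          rw [hp1, hw₂u₁] at hx
          exact hx
        have hw₁u₁ : w₁ ≠ u₁ := by rw [← hw₂u₁]; exact hw12
        have hadj := E8 w₁ hadjz1u₁ (by rw [← hp1]; exact hA1)
          (by rw [← hp2]; exact a_t'_w₁) hw₁u₁
        exact mkTri w₁ u₁ (Finset.mem_of_mem_erase hw₁old) hu₁P hw₁u₁
          (Finset.mem_erase.1 hw₁old).1 hu₁v hvw₁
          (E2 (v.1, qm) u₁ (Or.inl rfl) hadjz1u₁ hu₁v) hadj
      · have hw₄u₁ : w₄ = u₁ := by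
          rcases hM with ⟨h1', _⟩ | ⟨h1', _⟩
          · exact h1'
          · exfalso
            have hx := h₄
            rw [hp2, h1'] at hx
            exact E9 hx
        have hadjz1u₁ : IGAdj P (v.1, qm) u₁ := by
          have hx := h₄
          rw [hp2, hw₄u₁] at hx
          exact hx
        have hw₁u₁ : w₁ ≠ u₁ := by rw [← hw₄u₁]; exact hw₁w₄
        have hadj := E8 w₁ hadjz1u₁ (by rw [← hp2]; exact a_t'_w₁)
          (by rw [← hp1]; exact hA1) hw₁u₁
        exact mkTri w₁ u₁ (Finset.mem_of_mem_erase hw₁old) hu₁P hw₁u₁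
          (Finset.mem_erase.1 hw₁old).1 hu₁v hvw₁
          (E2 (v.1, qm) u₁ (Or.inl rfl) hadjz1u₁ hu₁v) hadj
  · by_cases hshort₂ : w₄ = w₂
    · -- first piece long, second short
      have hM := M w₁ w₃ r₁' hr₁'p hold₁ hvw₁ hvw₃ hshort₁
      have a_t'_w₂ : IGAdj P t' w₂ := by rw [← hshort₂]; exact h₄
      have a_t_w₂ : IGAdj P t w₂ := gmmn_IGAdj_symm hA2
      rcases hpair with ⟨hp1, hp2⟩ | ⟨hp1, hp2⟩
      · have hw₁u₁ : w₁ = u₁ := by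
          rcases hM with ⟨h1', _⟩ | ⟨h1', _⟩
          · exact h1'
          · exfalso
            have hx := hA1
            rw [hp1, h1'] at hx
            exact E9 hx
        have hadjz1u₁ : IGAdj P (v.1, qm) u₁ := by
          have hx := hA1
          rw [hp1, hw₁u₁] at hx
          exact hx
        have hw₂u₁ : w₂ ≠ u₁ := by rw [← hw₁u₁]; exact Ne.symm hw12
        have hadj := E8 w₂ hadjz1u₁ (by rw [← hp1]; exact a_t_w₂)
          (by rw [← hp2]; exact a_t'_w₂) hw₂u₁
        exact mkTri w₂ u₁ (Finset.mem_of_mem_erase hw₂old) hu₁P hw₂u₁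
          (Finset.mem_erase.1 hw₂old).1 hu₁v hvw₂
          (E2 (v.1, qm) u₁ (Or.inl rfl) hadjz1u₁ hu₁v) hadj
      · have hw₃u₁ : w₃ = u₁ := by
          rcases hM with ⟨_, h2'⟩ | ⟨_, h2'⟩
          · exfalso
            have hx := gmmn_IGAdj_symm h₃
            rw [hp2, h2'] at hx
            exact E9 hx
          · exact h2'
        have hadjz1u₁ : IGAdj P (v.1, qm) u₁ := by
          have hx := gmmn_IGAdj_symm h₃
          rw [hp2, hw₃u₁] at hx
          exact hx
        have hw₂u₁ : w₂ ≠ u₁ := by rw [← hw₃u₁]; exact Ne.symm hw₃w₂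
        have hadj := E8 w₂ hadjz1u₁ (by rw [← hp2]; exact a_t'_w₂)
          (by rw [← hp1]; exact a_t_w₂) hw₂u₁
        exact mkTri w₂ u₁ (Finset.mem_of_mem_erase hw₂old) hu₁P hw₂u₁
          (Finset.mem_erase.1 hw₂old).1 hu₁v hvw₂
          (E2 (v.1, qm) u₁ (Or.inl rfl) hadjz1u₁ hu₁v) hadj
    · -- both pieces long
      have hM1 := M w₁ w₃ r₁' hr₁'p hold₁ hvw₁ hvw₃ hshort₁
      have hM2 := M w₄ w₂ r₂' hr₂'p hold₂ hvw₄ hvw₂ hshort₂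
      rcases hM1 with ⟨h1', h2'⟩ | ⟨h1', h2'⟩ <;> rcases hM2 with ⟨f1', f2'⟩ | ⟨f1', f2'⟩
      · exact hw₁w₄ (h1'.trans f1'.symm)
      · exact hw12 (h1'.trans f2'.symm)
      · exact hw12 (h1'.trans f2'.symm)
      · exact hw₁w₄ (h1'.trans f1'.symm)

/-- Claim 6.1: with the construction of Section 6 — `IG[P]` triangle-free, connected, with
exactly one cycle (of length `m ≥ 4`, with no degenerate pair on it); `v = (s_v, t_v)` a
regular nondegenerate pair on the cycle whose subgrid `H(P, v)` is an `a × b` grid with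
vertices `p_{i,j} = (X j, Y i)`, `p_{0,0} = s_v`; `u₁, u₂` the neighbors of `v` on the cycle,
with `B(u₁)` and `B(u₂)` strictly separated by a vertical line, `B(u₁)` on the left; `α, β`
determined by the boundaries of `B(u₁) ∩ B(v)` and `B(u₂) ∩ B(v)` with `p_{α,β} ≠ t_v`; and
a triple `q⁻ ≤ q ≤ q⁺` chosen from `𝓔^hor(p_{i,β})` for some `i ≤ α` or from
`𝓔^vert(p_{α,j})` for some `j ≤ β` — the intersection graph of the modified instance
`P̃ = (P \ {v}) ∪ {(s_v, q⁻), (q⁻, q), (q, q⁺), (q⁺, t_v)}` is a forest. -/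
theorem modified_instance_is_forest
    (P : Inst)
    (hconn : (IG P).Connected)
    (htrianglefree : (IG P).CliqueFree 3)
    -- a connected graph contains exactly one cycle iff it has as many edges as vertices
    (hunicyclic : ((IG P).edgeSet).ncard = P.card)
    -- the cycle, of length at least four
    (m : ℕ) (hm : 4 ≤ m) (c : ℕ → Point × Point)
    (hcP : ∀ i < m, c i ∈ P)
    (hcinj : ∀ i < m, ∀ j < m, c i = c j → i = j)
    (hccycle : ∀ i < m, IGAdj P (c i) (c ((i + 1) % m)))
    (hcnondeg : ∀ i < m, ¬ Degenerate (c i))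
    -- the chosen pair v on the cycle and its neighbors u₁, u₂ on the cycle
    (v u₁ u₂ : Point × Point)
    (hv : v = c 0) (hu₁ : u₁ = c 1) (hu₂ : u₂ = c (m - 1))
    (hvreg : v.1 ≤ v.2)
    -- H(P, v) is an a × b grid with vertices pᵢⱼ = (X j, Y i), p₀₀ = s_v (0-indexed)
    (a b : ℕ) (ha : 2 ≤ a) (hb : 2 ≤ b)
    (X Y : ℕ → ℝ)
    (hX : StrictMonoOn X (Set.Iio b)) (hY : StrictMonoOn Y (Set.Iio a))
    (hgrid : ∀ z : Point,
      (z ∈ hananV P ∧ inBox v.1 v.2 z) ↔ ∃ i < a, ∃ j < b, z = (X j, Y i))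
    (hs : (X 0, Y 0) = v.1) (ht : (X (b - 1), Y (a - 1)) = v.2)
    -- B(u₁) and B(u₂) are separated by a vertical line avoiding both, B(u₁) on the left
    (hsep : ∃ x₀ : ℝ, (u₁.1 ⊔ u₁.2).1 < x₀ ∧ x₀ < (u₂.1 ⊓ u₂.2).1)
    -- α and β: (X β, Y α) is determined by the right boundary of B(u₁) ∩ B(v) and the
    -- lower of the upper boundaries of B(u₁) ∩ B(v) and B(u₂) ∩ B(v)
    (α β : ℕ) (hαa : α < a) (hβb : β < b)
    (hβ : X β = min (u₁.1 ⊔ u₁.2).1 v.2.1)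
    (hα : Y α = min (min (u₁.1 ⊔ u₁.2).2 v.2.2) (min (u₂.1 ⊔ u₂.2).2 v.2.2))
    (hne : (X β, Y α) ≠ v.2)
    -- the chosen triple q⁻ ≤ q ≤ q⁺, of horizontal or vertical form
    (qm q qp : Point)
    (hform :
      (∃ i ≤ α, β + 1 < b ∧ q = (X β, Y i) ∧ qp = (X (β + 1), Y i) ∧
        ((i = 0 ∧ β = 0 ∧ qm = q) ∨
         (0 < β ∧ qm = (X (β - 1), Y i)) ∨
         (0 < i ∧ qm = (X β, Y (i - 1))))) ∨
      (∃ j ≤ β, α + 1 < a ∧ q = (X j, Y α) ∧ qp = (X j, Y (α + 1)) ∧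
        ((α = 0 ∧ j = 0 ∧ qm = q) ∨
         (0 < α ∧ qm = (X j, Y (α - 1))) ∨
         (0 < j ∧ qm = (X (j - 1), Y α)))))
    -- the modified instance P̃
    (Pt : Inst)
    (hPt : Pt = (P.erase v) ∪ {(v.1, qm), (qm, q), (q, qp), (qp, v.2)}) :
    (IG Pt).IsAcyclic := by
  have hvP : v ∈ P := hv ▸ hcP 0 (by omega)
  have hbox_v : ∀ z : Point, inBox v.1 v.2 z ↔ v.1 ≤ z ∧ z ≤ v.2 := fun z =>
    gmmn_inBox_iff hvreg z
  have hgp : ∀ i j, i < a → j < b → ((X j, Y i) ∈ hananV P ∧ inBox v.1 v.2 (X j, Y i)) :=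
    fun i j hi hj => (hgrid (X j, Y i)).2 ⟨i, hi, j, hj, rfl⟩
  have hXlt : ∀ {j j' : ℕ}, j < j' → j' < b → X j < X j' := fun {j j'} h h' =>
    hX (Set.mem_Iio.2 (by omega)) (Set.mem_Iio.2 h') h
  have hYlt : ∀ {i i' : ℕ}, i < i' → i' < a → Y i < Y i' := fun {i i'} h h' =>
    hY (Set.mem_Iio.2 (by omega)) (Set.mem_Iio.2 h') h
  have hXle : ∀ {j j' : ℕ}, j ≤ j' → j' < b → X j ≤ X j' := by
    intro j j' h h'
    rcases eq_or_lt_of_le h with rfl | hlt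
    · exact le_refl _
    · exact (hXlt hlt h').le
  have hYle : ∀ {i i' : ℕ}, i ≤ i' → i' < a → Y i ≤ Y i' := by
    intro i i' h h'
    rcases eq_or_lt_of_le h with rfl | hlt
    · exact le_refl _
    · exact (hYlt hlt h').le
  have hsx : X 0 = v.1.1 := congrArg Prod.fst hs
  have hsy : Y 0 = v.1.2 := congrArg Prod.snd hs
  have htx : X (b - 1) = v.2.1 := congrArg Prod.fst ht
  have hty : Y (a - 1) = v.2.2 := congrArg Prod.snd ht
  have hgpbox : ∀ i j, i < a → j < b → v.1 ≤ (X j, Y i) ∧ ((X j, Y i) : Point) ≤ v.2 :=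
    fun i j hi hj => (hbox_v _).1 (hgp i j hi hj).2
  have hlocate : ∀ z : Point, z ∈ hananV P → v.1 ≤ z → z ≤ v.2 →
      ∃ i < a, ∃ j < b, z = (X j, Y i) :=
    fun z hz h1 h2 => (hgrid z).1 ⟨hz, (hbox_v z).2 ⟨h1, h2⟩⟩
  have hpinchX : ∀ (j1 j2 j' : ℕ), j1 < b → j2 < b → j' < b → j1 + 1 = j2 →
      X j1 ≤ X j' → X j' ≤ X j2 → X j' = X j1 ∨ X j' = X j2 := by
    intro j1 j2 j' h1 h2 h3 hsucc hle1 hle2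
    rcases lt_trichotomy j' j2 with hc | hc | hc
    · left
      exact le_antisymm (hXle (by omega) h1) hle1
    · right
      rw [hc]
    · exfalso
      exact absurd hle2 (not_le.2 (hXlt hc h3))
  have hpinchY : ∀ (i1 i2 i' : ℕ), i1 < a → i2 < a → i' < a → i1 + 1 = i2 →
      Y i1 ≤ Y i' → Y i' ≤ Y i2 → Y i' = Y i1 ∨ Y i' = Y i2 := by
    intro i1 i2 i' h1 h2 h3 hsucc hle1 hle2
    rcases lt_trichotomy i' i2 with hc | hc | hc
    · left
      exact le_antisymm (hYle (by omega) h1) hle1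
    · right
      rw [hc]
    · exfalso
      exact absurd hle2 (not_le.2 (hYlt hc h3))
  have hsegH : ∀ (i j1 j2 : ℕ), i < a → j1 < b → j2 < b → j1 + 1 = j2 →
      ∀ z ∈ hananV P, ((X j1, Y i) : Point) ≤ z → z ≤ (X j2, Y i) →
      z = (X j1, Y i) ∨ z = (X j2, Y i) := by
    intro i j1 j2 hi h1 h2 hsucc z hz hzl hzr
    obtain ⟨i', hi', j', hj', rfl⟩ := hlocate z hz
      ((hgpbox i j1 hi h1).1.trans hzl) (hzr.trans (hgpbox i j2 hi h2).2)
    have hy' : Y i' = Y i := le_antisymm hzr.2 hzl.2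
    rcases hpinchX j1 j2 j' h1 h2 hj' hsucc hzl.1 hzr.1 with hx' | hx'
    · left
      rw [hx', hy']
    · right
      rw [hx', hy']
  have hsegV : ∀ (j i1 i2 : ℕ), j < b → i1 < a → i2 < a → i1 + 1 = i2 →
      ∀ z ∈ hananV P, ((X j, Y i1) : Point) ≤ z → z ≤ (X j, Y i2) →
      z = (X j, Y i1) ∨ z = (X j, Y i2) := by
    intro j i1 i2 hj h1 h2 hsucc z hz hzl hzr
    obtain ⟨i', hi', j', hj', rfl⟩ := hlocate z hz
      ((hgpbox i1 j h1 hj).1.trans hzl) (hzr.trans (hgpbox i2 j h2 hj).2)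
    have hx' : X j' = X j := le_antisymm hzr.1 hzl.1
    rcases hpinchY i1 i2 i' h1 h2 hi' hsucc hzl.2 hzr.2 with hy' | hy'
    · left
      rw [hx', hy']
    · right
      rw [hx', hy']
  have hmkHE : ∀ (g₁ g₂ : Point), g₁ ∈ hananV P → g₂ ∈ hananV P → g₁ ≠ g₂ →
      axisAligned g₁ g₂ → g₁ ≤ g₂ → (∀ z ∈ hananV P, g₁ ≤ z → z ≤ g₂ → z = g₁ ∨ z = g₂) →
      IsHananEdge P g₁ g₂ :=
    fun g₁ g₂ h1 h2 hne hax hle hseg =>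
      ⟨h1, h2, hne, hax, fun z hz hb =>
        hseg z hz ((gmmn_inBox_iff hle z).1 hb).1 ((gmmn_inBox_iff hle z).1 hb).2⟩
  obtain ⟨x₀, hx1, hx2⟩ := hsep
  have hXβu₁le : X β ≤ (u₁.1 ⊔ u₁.2).1 := by
    rw [hβ]
    exact min_le_left _ _
  have hU2base : X β < (u₂.1 ⊓ u₂.2).1 := lt_of_le_of_lt hXβu₁le (hx1.trans hx2)
  have hYαu₁ : Y α ≤ (u₁.1 ⊔ u₁.2).2 := by
    rw [hα]
    exact (min_le_left _ _).trans (min_le_left _ _)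
  rcases hform with ⟨i, hiα, hβ1b, hq, hqp, hqm⟩ | ⟨j, hjβ, hα1a, hq, hqp, hqm⟩
  · -- horizontal form
    subst hq
    subst hqp
    have hia : i < a := lt_of_le_of_lt hiα hαa
    have hb1 : b - 1 < b := by omega
    have hXβ_lt : X β < X (β + 1) := hXlt (by omega) hβ1b
    have hXβ1v2 : X (β + 1) ≤ v.2.1 := htx ▸ hXle (by omega) hb1
    have hXβ_lt_v2 : X β < v.2.1 := lt_of_lt_of_le hXβ_lt hXβ1v2
    have hXβu₁ : X β = (u₁.1 ⊔ u₁.2).1 := by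
      rcases min_cases (u₁.1 ⊔ u₁.2).1 v.2.1 with ⟨h1', _⟩ | ⟨h1', _⟩
      · rw [hβ, h1']
      · exfalso
        rw [hβ, h1'] at hXβ_lt_v2
        exact lt_irrefl _ hXβ_lt_v2
    have hqHV : ((X β, Y i) : Point) ∈ hananV P := (hgp i β hia hβb).1
    have hqpHV : ((X (β + 1), Y i) : Point) ∈ hananV P := (hgp i (β + 1) hia hβ1b).1
    have ho3 : ((X β, Y i) : Point) ≤ (X (β + 1), Y i) := Prod.mk_le_mk.2 ⟨hXβ_lt.le, le_refl _⟩
    have ho4 : ((X (β + 1), Y i) : Point) ≤ v.2 := (hgpbox i (β + 1) hia hβ1b).2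
    have hSeg2 := hsegH i β (β + 1) hia hβb hβ1b rfl
    have hHE2 : IsHananEdge P (X β, Y i) (X (β + 1), Y i) :=
      hmkHE _ _ hqHV hqpHV (fun h => hXβ_lt.ne (congrArg Prod.fst h)) (Or.inr rfl) ho3 hSeg2
    have hdU1 : ((X β, Y i) : Point) ≤ u₁.1 ⊔ u₁.2 :=
      Prod.mk_le_mk.2 ⟨hXβu₁le, (hYle hiα hαa).trans hYαu₁⟩
    have hdZ4 : (u₁.1 ⊔ u₁.2).1 < ((X (β + 1), Y i) : Point).1 ∨
        (u₁.1 ⊔ u₁.2).2 < ((X (β + 1), Y i) : Point).2 ∨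
        (u₂.1 ⊔ u₂.2).2 < ((X (β + 1), Y i) : Point).2 := by
      left
      rw [← hXβu₁]
      exact hXβ_lt
    rcases hqm with ⟨hi0, hβ0, hqm⟩ | ⟨hβpos, hqm⟩ | ⟨hipos, hqm⟩
    · subst hqm
      subst hi0
      subst hβ0
      exact gmmn_core P hconn htrianglefree hunicyclic m hm c hcP hcinj hccycle v u₁ u₂
        hv hu₁ hu₂ hvP _ _ _ hs.ge (le_refl _) ho3 ho4 (fun _ => hs)
        hqHV hqHV hqpHV (fun h => absurd rfl h) hHE2
        (fun z hz h1 h2 => Or.inl (le_antisymm h2 h1)) hSeg2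
        hU2base hdU1 hdZ4 Pt hPt
    · subst hqm
      have hβ1 : β - 1 < b := by omega
      have ho1 : v.1 ≤ ((X (β - 1), Y i) : Point) := (hgpbox i (β - 1) hia hβ1).1
      have ho2 : ((X (β - 1), Y i) : Point) ≤ (X β, Y i) :=
        Prod.mk_le_mk.2 ⟨hXle (by omega) hβb, le_refl _⟩
      have hlt : X (β - 1) < X β := hXlt (by omega) hβb
      have hSeg1 := hsegH i (β - 1) β hia hβ1 hβb (by omega)
      exact gmmn_core P hconn htrianglefree hunicyclic m hm c hcP hcinj hccycle v u₁ u₂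
        hv hu₁ hu₂ hvP _ _ _ ho1 ho2 ho3 ho4
        (fun h => absurd (congrArg Prod.fst h) hlt.ne)
        (hgp i (β - 1) hia hβ1).1 hqHV hqpHV
        (fun _ => hmkHE _ _ (hgp i (β - 1) hia hβ1).1 hqHV
          (fun h => hlt.ne (congrArg Prod.fst h)) (Or.inr rfl) ho2 hSeg1)
        hHE2 hSeg1 hSeg2 (lt_of_le_of_lt (hXle (by omega) hβb) hU2base) hdU1 hdZ4 Pt hPt
    · subst hqm
      have hi1 : i - 1 < a := by omega
      have ho1 : v.1 ≤ ((X β, Y (i - 1)) : Point) := (hgpbox (i - 1) β hi1 hβb).1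
      have ho2 : ((X β, Y (i - 1)) : Point) ≤ (X β, Y i) :=
        Prod.mk_le_mk.2 ⟨le_refl _, hYle (by omega) hia⟩
      have hlt : Y (i - 1) < Y i := hYlt (by omega) hia
      have hSeg1 := hsegV β (i - 1) i hβb hi1 hia (by omega)
      exact gmmn_core P hconn htrianglefree hunicyclic m hm c hcP hcinj hccycle v u₁ u₂
        hv hu₁ hu₂ hvP _ _ _ ho1 ho2 ho3 ho4
        (fun h => absurd (congrArg Prod.snd h) hlt.ne)
        (hgp (i - 1) β hi1 hβb).1 hqHV hqpHV
        (fun _ => hmkHE _ _ (hgp (i - 1) β hi1 hβb).1 hqHV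
          (fun h => hlt.ne (congrArg Prod.snd h)) (Or.inl rfl) ho2 hSeg1)
        hHE2 hSeg1 hSeg2 hU2base hdU1 hdZ4 Pt hPt
  · -- vertical form
    subst hq
    subst hqp
    have hjb : j < b := lt_of_le_of_lt hjβ hβb
    have ha1 : a - 1 < a := by omega
    have hYα_lt : Y α < Y (α + 1) := hYlt (by omega) hα1a
    have hYα1v2 : Y (α + 1) ≤ v.2.2 := hty ▸ hYle (by omega) ha1
    have hYα_lt_v2 : Y α < v.2.2 := lt_of_lt_of_le hYα_lt hYα1v2
    have hqHV : ((X j, Y α) : Point) ∈ hananV P := (hgp α j hαa hjb).1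
    have hqpHV : ((X j, Y (α + 1)) : Point) ∈ hananV P := (hgp (α + 1) j hα1a hjb).1
    have ho3 : ((X j, Y α) : Point) ≤ (X j, Y (α + 1)) := Prod.mk_le_mk.2 ⟨le_refl _, hYα_lt.le⟩
    have ho4 : ((X j, Y (α + 1)) : Point) ≤ v.2 := (hgpbox (α + 1) j hα1a hjb).2
    have hSeg2 := hsegV j α (α + 1) hjb hαa hα1a rfl
    have hHE2 : IsHananEdge P (X j, Y α) (X j, Y (α + 1)) :=
      hmkHE _ _ hqHV hqpHV (fun h => hYα_lt.ne (congrArg Prod.snd h)) (Or.inl rfl) ho3 hSeg2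
    have hdU1 : ((X j, Y α) : Point) ≤ u₁.1 ⊔ u₁.2 :=
      Prod.mk_le_mk.2 ⟨(hXle hjβ hβb).trans hXβu₁le, hYαu₁⟩
    have hdU2b : X j < (u₂.1 ⊓ u₂.2).1 := lt_of_le_of_lt (hXle hjβ hβb) hU2base
    have hdZ4 : (u₁.1 ⊔ u₁.2).1 < ((X j, Y (α + 1)) : Point).1 ∨
        (u₁.1 ⊔ u₁.2).2 < ((X j, Y (α + 1)) : Point).2 ∨
        (u₂.1 ⊔ u₂.2).2 < ((X j, Y (α + 1)) : Point).2 := by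
      rcases le_total ((u₁.1 ⊔ u₁.2).2) ((u₂.1 ⊔ u₂.2).2) with hAB | hAB
      · have h1 : Y α = min (u₁.1 ⊔ u₁.2).2 v.2.2 := by
          rw [hα]
          exact min_eq_left (min_le_min hAB (le_refl _))
        have h2 : Y α = (u₁.1 ⊔ u₁.2).2 := by
          rcases min_cases ((u₁.1 ⊔ u₁.2).2) v.2.2 with ⟨hc, _⟩ | ⟨hc, _⟩
          · rw [h1, hc]
          · exfalso
            rw [h1, hc] at hYα_lt_v2
            exact lt_irrefl _ hYα_lt_v2
        exact Or.inr (Or.inl (by rw [← h2]; exact hYα_lt))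
      · have h1 : Y α = min (u₂.1 ⊔ u₂.2).2 v.2.2 := by
          rw [hα]
          exact min_eq_right (min_le_min hAB (le_refl _))
        have h2 : Y α = (u₂.1 ⊔ u₂.2).2 := by
          rcases min_cases ((u₂.1 ⊔ u₂.2).2) v.2.2 with ⟨hc, _⟩ | ⟨hc, _⟩
          · rw [h1, hc]
          · exfalso
            rw [h1, hc] at hYα_lt_v2
            exact lt_irrefl _ hYα_lt_v2
        exact Or.inr (Or.inr (by rw [← h2]; exact hYα_lt))
    rcases hqm with ⟨hα0, hj0, hqm⟩ | ⟨hαpos, hqm⟩ | ⟨hjpos, hqm⟩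
    · subst hqm
      subst hα0
      subst hj0
      exact gmmn_core P hconn htrianglefree hunicyclic m hm c hcP hcinj hccycle v u₁ u₂
        hv hu₁ hu₂ hvP _ _ _ hs.ge (le_refl _) ho3 ho4 (fun _ => hs)
        hqHV hqHV hqpHV (fun h => absurd rfl h) hHE2
        (fun z hz h1 h2 => Or.inl (le_antisymm h2 h1)) hSeg2
        hdU2b hdU1 hdZ4 Pt hPt
    · subst hqm
      have hα1 : α - 1 < a := by omega
      have ho1 : v.1 ≤ ((X j, Y (α - 1)) : Point) := (hgpbox (α - 1) j hα1 hjb).1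
      have ho2 : ((X j, Y (α - 1)) : Point) ≤ (X j, Y α) :=
        Prod.mk_le_mk.2 ⟨le_refl _, hYle (by omega) hαa⟩
      have hlt : Y (α - 1) < Y α := hYlt (by omega) hαa
      have hSeg1 := hsegV j (α - 1) α hjb hα1 hαa (by omega)
      exact gmmn_core P hconn htrianglefree hunicyclic m hm c hcP hcinj hccycle v u₁ u₂
        hv hu₁ hu₂ hvP _ _ _ ho1 ho2 ho3 ho4
        (fun h => absurd (congrArg Prod.snd h) hlt.ne)
        (hgp (α - 1) j hα1 hjb).1 hqHV hqpHV
        (fun _ => hmkHE _ _ (hgp (α - 1) j hα1 hjb).1 hqHV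
          (fun h => hlt.ne (congrArg Prod.snd h)) (Or.inl rfl) ho2 hSeg1)
        hHE2 hSeg1 hSeg2 hdU2b hdU1 hdZ4 Pt hPt
    · subst hqm
      have hj1 : j - 1 < b := by omega
      have ho1 : v.1 ≤ ((X (j - 1), Y α) : Point) := (hgpbox α (j - 1) hαa hj1).1
      have ho2 : ((X (j - 1), Y α) : Point) ≤ (X j, Y α) :=
        Prod.mk_le_mk.2 ⟨hXle (by omega) hjb, le_refl _⟩
      have hlt : X (j - 1) < X j := hXlt (by omega) hjb
      have hSeg1 := hsegH α (j - 1) j hαa hj1 hjb (by omega)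
      exact gmmn_core P hconn htrianglefree hunicyclic m hm c hcP hcinj hccycle v u₁ u₂
        hv hu₁ hu₂ hvP _ _ _ ho1 ho2 ho3 ho4
        (fun h => absurd (congrArg Prod.fst h) hlt.ne)
        (hgp α (j - 1) hαa hj1).1 hqHV hqpHV
        (fun _ => hmkHE _ _ (hgp α (j - 1) hαa hj1).1 hqHV
          (fun h => hlt.ne (congrArg Prod.fst h)) (Or.inr rfl) ho2 hSeg1)
        hHE2 hSeg1 hSeg2 (lt_of_le_of_lt (hXle (by omega) hjb) hdU2b) hdU1 hdZ4 Pt hPt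

end
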